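/- arXiv:hep-th/9408143 — 5 statements merged into one kernel-verified Lean document; each statement's English description precedes it below -/
import Mathlib

section
/- For 0 < q < 1, Re(z) > 0 and Re(s) > 0, the q-Hurwitz zeta function ζ(s,z:q) = Σ_{k=0}^∞ q^{s(k+1)} / [k+z]_q^s satisfies the identity ζ(s,z:q) = (q - q²)^s · Σ_{r=0}^∞ ((s)_r / r!) · q^{rz} / (1 - q^{r+s}), where (s)_r = s(s+1)···(s+r-1) is the Pochhammer symbol and [x]_q = (1-q^x)/(1-q). -/
open Complex

/-- The q-bracket `[x]_q = (1 - q^x)/(1 - q)` as a complex number, `0 < q < 1`. -/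
noncomputable def qBracket (q : ℝ) (x : ℂ) : ℂ := (1 - (q : ℂ) ^ x) / (1 - (q : ℂ))

section Helpers

open Polynomial Filter Topology

lemma asc_eval_nonneg {b : ℝ} (hb : 0 ≤ b) (r : ℕ) : 0 ≤ (ascPochhammer ℝ r).eval b := by
  induction r with
  | zero => simp
  | succ n ih => rw [ascPochhammer_succ_eval]; exact mul_nonneg ih (by positivity)

lemma asc_eval_pos {b : ℝ} (hb : 0 < b) (r : ℕ) : 0 < (ascPochhammer ℝ r).eval b := by
  induction r with
  | zero => simp
  | succ n ih => rw [ascPochhammer_succ_eval]; exact mul_pos ih (by positivity)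

lemma asc_eval_mono {b c : ℝ} (hb : 0 ≤ b) (hbc : b ≤ c) (r : ℕ) :
    (ascPochhammer ℝ r).eval b ≤ (ascPochhammer ℝ r).eval c := by
  induction r with
  | zero => simp
  | succ n ih =>
      rw [ascPochhammer_succ_eval, ascPochhammer_succ_eval]
      exact mul_le_mul ih (by linarith) (by positivity) (asc_eval_nonneg (hb.trans hbc) n)

lemma norm_asc_eval_le (s : ℂ) (r : ℕ) :
    ‖(ascPochhammer ℂ r).eval s‖ ≤ (ascPochhammer ℝ r).eval ‖s‖ := by
  induction r with
  | zero => simp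
  | succ n ih =>
      rw [ascPochhammer_succ_eval, ascPochhammer_succ_eval, norm_mul]
      refine mul_le_mul ih ?_ (norm_nonneg _) (asc_eval_nonneg (norm_nonneg _) n)
      calc ‖s + (n:ℂ)‖ ≤ ‖s‖ + ‖(n:ℂ)‖ := norm_add_le _ _
        _ = ‖s‖ + n := by simp

lemma summable_asc_aux {b x : ℝ} (hb : 0 < b) (hx0 : 0 < x) (hx1 : x < 1) :
    Summable (fun r : ℕ => (ascPochhammer ℝ r).eval b / r.factorial * x ^ r) := by
  apply summable_of_ratio_test_tendsto_lt_one hx1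
  · filter_upwards with r
    have h1 := asc_eval_pos hb r
    have h2 : (0:ℝ) < r.factorial := by positivity
    positivity
  · have key : ∀ n : ℕ, ‖(ascPochhammer ℝ (n+1)).eval b / (n+1).factorial * x ^ (n+1)‖ /
        ‖(ascPochhammer ℝ n).eval b / n.factorial * x ^ n‖ = (b + n) * x / (n + 1) := by
      intro n
      have h1 := asc_eval_pos hb n
      have h1' := asc_eval_pos hb (n+1)
      have h2 : (0:ℝ) < n.factorial := by positivity
      have h3 : (0:ℝ) < (n+1).factorial := by positivity
      rw [Real.norm_of_nonneg (by positivity), Real.norm_of_nonneg (by positivity),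
        ascPochhammer_succ_eval, Nat.factorial_succ]
      have hb' : 0 < b + n := by positivity
      push_cast
      field_simp
      ring
    simp_rw [key]
    have h0 : Tendsto (fun n : ℕ => x + (x*(b-1)) * (1/((n:ℝ)+1))) atTop (𝓝 (x + (x*(b-1)) * 0)) :=
      tendsto_const_nhds.add (tendsto_one_div_add_atTop_nhds_zero_nat.const_mul _)
    rw [mul_zero, add_zero] at h0
    refine h0.congr fun n => ?_
    field_simp
    ring

lemma norm_coeff_le (s : ℂ) (r : ℕ) :
    ‖(ascPochhammer ℂ r).eval s / (r.factorial : ℂ)‖ ≤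
      (ascPochhammer ℝ r).eval (‖s‖ + 1) / r.factorial := by
  rw [norm_div]
  have h2 : (0:ℝ) < r.factorial := by positivity
  have h3 : ‖((r.factorial : ℕ) : ℂ)‖ = (r.factorial : ℝ) := by simp
  rw [h3]
  gcongr
  exact (norm_asc_eval_le s r).trans (asc_eval_mono (norm_nonneg _) (by linarith) r)

lemma coeff_rec (s : ℂ) (r : ℕ) :
    (ascPochhammer ℂ (r+1)).eval s / ((r+1).factorial : ℂ) * ((r:ℂ)+1) =
      (ascPochhammer ℂ r).eval s / (r.factorial : ℂ) * (s + r) := by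
  have h1 : ((r.factorial : ℕ) : ℂ) ≠ 0 := Nat.cast_ne_zero.2 r.factorial_ne_zero
  have h2 : ((r:ℂ)+1) ≠ 0 := by
    have : ((r:ℂ)+1) = ((r+1 : ℕ) : ℂ) := by push_cast; ring
    rw [this]; exact Nat.cast_ne_zero.2 (Nat.succ_ne_zero r)
  rw [ascPochhammer_succ_eval, Nat.factorial_succ]
  push_cast
  field_simp

lemma cpow_div_ofReal {x : ℂ} (hx : x ≠ 0) {c : ℝ} (hc : 0 < c) (s : ℂ) :
    (x / (c:ℂ)) ^ s = x ^ s / (c:ℂ) ^ s := by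
  have hc0 : (c:ℂ) ≠ 0 := by exact_mod_cast hc.ne'
  have hxc : x / (c:ℂ) ≠ 0 := div_ne_zero hx hc0
  have hd : x / (c:ℂ) = ((c⁻¹ : ℝ) : ℂ) * x := by push_cast; ring
  rw [Complex.cpow_def_of_ne_zero hxc, Complex.cpow_def_of_ne_zero hx,
    Complex.cpow_def_of_ne_zero hc0, hd, Complex.log_ofReal_mul (inv_pos.2 hc) hx,
    Real.log_inv, ← Complex.ofReal_log hc.le, ← Complex.exp_sub]
  congr 1
  push_cast
  ring

lemma hasSum_binomial (s : ℂ) {w : ℂ} (hw : ‖w‖ < 1) :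
    HasSum (fun r : ℕ => (ascPochhammer ℂ r).eval s / (r.factorial : ℂ) * w ^ r)
      ((1 - w) ^ (-s)) := by
  set a : ℕ → ℂ := fun r => (ascPochhammer ℂ r).eval s / (r.factorial : ℂ) with ha
  set B : ℝ := ‖s‖ + 1 with hB
  have hB0 : 0 < B := by positivity
  set ρ : ℝ := (‖w‖ + 1) / 2 with hρ
  have hρ0 : 0 < ρ := by positivity
  have hρ1 : ρ < 1 := by rw [hρ]; linarith
  have hwρ : ‖w‖ < ρ := by rw [hρ]; linarith
  set t : Set ℂ := Metric.ball (0:ℂ) ρ with ht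
  have h0t : (0:ℂ) ∈ t := Metric.mem_ball_self hρ0
  have hwt : w ∈ t := by simpa [ht, Metric.mem_ball, dist_eq_norm] using hwρ
  -- summability of the series on t
  have hsum : ∀ y ∈ t, Summable (fun r => a r * y ^ r) := by
    intro y hy
    rw [ht, Metric.mem_ball, dist_eq_norm, sub_zero] at hy
    have : Summable (fun r : ℕ => (ascPochhammer ℝ r).eval B / r.factorial * ρ ^ r) :=
      summable_asc_aux hB0 hρ0 hρ1
    refine Summable.of_norm (this.of_nonneg_of_le (fun r => norm_nonneg _) fun r => ?_)
    rw [norm_mul, norm_pow]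
    have h1 := norm_coeff_le s r
    have h2 : ‖y‖ ^ r ≤ ρ ^ r := pow_le_pow_left₀ (norm_nonneg _) hy.le r
    have h3 : (0:ℝ) ≤ (ascPochhammer ℝ r).eval B / r.factorial := by
      have := asc_eval_nonneg hB0.le r; positivity
    exact mul_le_mul h1 h2 (by positivity) h3
  -- summable bound for the derivatives
  set u : ℕ → ℝ := fun r => (ascPochhammer ℝ r).eval B / r.factorial * (r * ρ ^ (r-1)) with hu
  have hu_sum : Summable u := by
    apply summable_of_ratio_test_tendsto_lt_one hρ1
    · filter_upwards [eventually_ge_atTop 1] with r hr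
      have h1 := asc_eval_pos hB0 r
      have h2 : (0:ℝ) < r.factorial := by positivity
      have h3 : (0:ℝ) < r := by exact_mod_cast hr
      have h4 : (0:ℝ) < ρ ^ (r-1) := by positivity
      have hval : u r = (ascPochhammer ℝ r).eval B / r.factorial * (r * ρ ^ (r-1)) := rfl
      rw [hval]
      exact ne_of_gt (mul_pos (div_pos h1 h2) (mul_pos h3 h4))
    · have key : ∀ n : ℕ, 1 ≤ n → ‖u (n+1)‖ / ‖u n‖ = (B + n) * ρ / n := by
        intro n hn
        have h1 := asc_eval_pos hB0 n
        have h2 : (0:ℝ) < n.factorial := by positivity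
        have h3 : (0:ℝ) < n := by exact_mod_cast hn
        have h4 : (0:ℝ) < ρ ^ (n-1) := by positivity
        have hpow : ρ ^ ((n+1)-1) = ρ ^ (n-1) * ρ := by
          have : (n+1)-1 = (n-1) + 1 := by omega
          rw [this, pow_succ]
        have h1' := asc_eval_pos hB0 (n+1)
        simp only [hu]
        rw [Real.norm_of_nonneg (mul_nonneg (div_nonneg h1'.le (by positivity))
            (by positivity)),
          Real.norm_of_nonneg (mul_nonneg (div_nonneg h1.le (by positivity)) (by positivity)),
          ascPochhammer_succ_eval, Nat.factorial_succ, hpow]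
        push_cast
        field_simp
      have h0 : Tendsto (fun n : ℕ => ρ + (ρ*B) * (1/(n:ℝ))) atTop (𝓝 (ρ + (ρ*B) * 0)) :=
        tendsto_const_nhds.add ((tendsto_one_div_atTop_nhds_zero_nat).const_mul _)
      rw [mul_zero, add_zero] at h0
      apply h0.congr'
      filter_upwards [eventually_ge_atTop 1] with n hn
      have h3 : (0:ℝ) < n := by exact_mod_cast hn
      rw [key n hn]
      field_simp
      ring
  -- derivatives
  have hderiv : ∀ (r : ℕ), ∀ y ∈ t, HasDerivAt (fun y : ℂ => a r * y ^ r)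
      (a r * (r * y ^ (r-1))) y := fun r y _ => (hasDerivAt_pow r y).const_mul (a r)
  have hbound : ∀ (r : ℕ), ∀ y ∈ t, ‖a r * (r * y ^ (r-1))‖ ≤ u r := by
    intro r y hy
    rw [ht, Metric.mem_ball, dist_eq_norm, sub_zero] at hy
    rw [norm_mul, norm_mul, norm_pow]
    have h1 := norm_coeff_le s r
    have h2 : ‖y‖ ^ (r-1) ≤ ρ ^ (r-1) := pow_le_pow_left₀ (norm_nonneg _) hy.le _
    have h3 : ‖(r:ℂ)‖ = (r:ℝ) := by simp
    rw [h3]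
    have h4 : (0:ℝ) ≤ (ascPochhammer ℝ r).eval B / r.factorial := by
      have := asc_eval_nonneg hB0.le r; positivity
    exact mul_le_mul h1 (by
      exact mul_le_mul le_rfl h2 (by positivity) (Nat.cast_nonneg r)) (by positivity) h4
  set F : ℂ → ℂ := fun y => ∑' r, a r * y ^ r with hF
  have hFderiv : ∀ y ∈ t, HasDerivAt F (∑' r, a r * ((r:ℂ) * y ^ (r-1))) y := by
    intro y hy
    exact hasDerivAt_tsum_of_isPreconnected hu_sum Metric.isOpen_ball
      (convex_ball (0:ℂ) ρ).isPreconnected hderiv hbound h0t (hsum 0 h0t) hy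
  -- the ODE
  have hG : ∀ y ∈ t, HasDerivAt (fun y => (1 - y) ^ s * F y) 0 y := by
    intro y hy
    have hyn : ‖y‖ < 1 := by
      rw [ht, Metric.mem_ball, dist_eq_norm, sub_zero] at hy; linarith
    have hre : 0 < (1 - y).re := by
      have := abs_re_le_norm y
      simp only [sub_re, one_re]
      have : |y.re| < 1 := lt_of_le_of_lt (abs_re_le_norm y) hyn
      rw [abs_lt] at this
      linarith
    have hne : (1 : ℂ) - y ≠ 0 := by
      intro h; rw [h] at hre; simp at hre
    have hd1 : HasDerivAt (fun y : ℂ => (1 - y) ^ s) (s * (1 - y) ^ (s-1) * (-1)) y := by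
      exact (((hasDerivAt_id y).const_sub 1).cpow_const (Or.inl hre))
    set D : ℂ := ∑' r, a r * ((r:ℂ) * y ^ (r-1)) with hD
    have hd2 : HasDerivAt F D y := hFderiv y hy
    have hDsum : HasSum (fun r => a r * ((r:ℂ) * y ^ (r-1))) D := by
      refine Summable.hasSum ?_
      exact Summable.of_norm (hu_sum.of_nonneg_of_le (fun r => norm_nonneg _)
        (fun r => hbound r y hy))
    have hFy : HasSum (fun r => a r * y ^ r) (F y) := (hsum y hy).hasSum
    -- key identity (1 - y) * D = s * F y
    have key : (1 - y) * D = s * F y := by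
      have hD1 : HasSum (fun r => a (r+1) * (((r+1:ℕ):ℂ) * y ^ ((r+1)-1))) (D - 0) := by
        have h00 : a 0 * (((0:ℕ):ℂ) * y ^ ((0:ℕ)-1)) = 0 := by simp
        have := (hasSum_nat_add_iff' (f := fun r => a r * ((r:ℂ) * y ^ (r-1))) 1).mpr hDsum
        simpa [h00] using this
      rw [sub_zero] at hD1
      have hS2 : HasSum (fun r => a r * ((r:ℂ) * y ^ r)) (y * D) := by
        have hfe : (fun r : ℕ => y * (a r * ((r:ℂ) * y ^ (r-1)))) =
            fun r => a r * ((r:ℂ) * y ^ r) := by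
          funext r
          cases r with
          | zero => simp
          | succ n =>
              simp only [Nat.add_sub_cancel, pow_succ]
              ring
        exact hfe ▸ hDsum.mul_left y
      have hdiff := hD1.sub hS2
      have hfe2 : (fun r : ℕ => a (r+1) * (((r+1:ℕ):ℂ) * y ^ ((r+1)-1)) -
          a r * ((r:ℂ) * y ^ r)) = fun r => s * (a r * y ^ r) := by
        funext r
        simp only [Nat.add_sub_cancel]
        have h1 : ((r+1:ℕ):ℂ) = (r:ℂ)+1 := by push_cast; ring
        rw [h1]
        have h2 := coeff_rec s r
        simp only [ha]
        linear_combination y ^ r * h2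
      have huniq : D - y * D = s * F y := (hfe2 ▸ hdiff).unique (hFy.mul_left s)
      linear_combination huniq
    have hcomb := hd1.mul hd2
    refine hcomb.congr_deriv ?_
    have hsplit : (1 - y) ^ s = (1 - y) ^ (s-1) * (1 - y) := by
      have e : s = (s - 1) + 1 := by ring
      calc (1 - y) ^ s = (1 - y) ^ ((s-1)+1) := by rw [← e]
        _ = (1 - y) ^ (s-1) * (1 - y) ^ (1:ℂ) := cpow_add _ _ hne
        _ = (1 - y) ^ (s-1) * (1 - y) := by rw [cpow_one]
    rw [hsplit]
    linear_combination (((1:ℂ)-y) ^ (s-1)) * key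
  -- constancy
  have hconst : ∀ y ∈ t, (1 - y) ^ s * F y = (1 - (0:ℂ)) ^ s * F 0 := by
    intro y hy
    have hle := (convex_ball (0:ℂ) ρ).norm_image_sub_le_of_norm_hasDerivWithin_le
      (f' := fun _ => (0:ℂ)) (fun x hx => (hG x hx).hasDerivWithinAt)
      (C := 0) (fun x hx => by simp) h0t hy
    rw [zero_mul] at hle
    have := norm_le_zero_iff.mp hle
    rwa [sub_eq_zero] at this
  have hF0 : F 0 = 1 := by
    simp only [hF]
    rw [tsum_eq_single 0 (fun r hr => by simp [ha, zero_pow hr])]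
    simp [ha]
  have hone : (1 - w) ^ s * F w = 1 := by
    rw [hconst w hwt, sub_zero, one_cpow, hF0, mul_one]
  have hnw : (1:ℂ) - w ≠ 0 := by
    intro h
    have : (1:ℂ) = w := by linear_combination h
    rw [← this] at hw
    simp at hw
  have hFw : F w = ((1 - w) ^ s)⁻¹ := eq_inv_of_mul_eq_one_right hone
  rw [cpow_neg, ← hFw]
  exact (hsum w hwt).hasSum

end Helpers

section Main

open Polynomial Filter Topology

/-- For `0 < q < 1`, `Re z > 0`, `Re s > 0`, the q-Hurwitz zeta series equals
`(q - q²)^s · Σ_r ((s)_r / r!) q^{rz} / (1 - q^{r+s})`. -/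
theorem qHurwitz_binomial_expansion (q : ℝ) (hq0 : 0 < q) (hq1 : q < 1)
    (z : ℂ) (hz : 0 < z.re) (s : ℂ) (hs : 0 < s.re) :
    (∑' k : ℕ, (q : ℂ) ^ (s * (k + 1)) / (qBracket q (k + z)) ^ s) =
      ((q : ℂ) - (q : ℂ) ^ 2) ^ s *
        ∑' r : ℕ, (Polynomial.eval s (ascPochhammer ℂ r) / (r.factorial : ℂ)) *
          (q : ℂ) ^ ((r : ℂ) * z) / (1 - (q : ℂ) ^ ((r : ℂ) + s)) := by
  have hq0' : (q:ℂ) ≠ 0 := ofReal_ne_zero.mpr hq0.ne'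
  have h1q : 0 < 1 - q := by linarith
  have hqnorm : ∀ c : ℂ, ‖(q:ℂ) ^ c‖ = q ^ c.re := fun c => by
    rw [Complex.norm_cpow_eq_rpow_re_of_pos hq0]
  set a : ℕ → ℂ := fun r => (ascPochhammer ℂ r).eval s / (r.factorial:ℂ) with ha
  set Q : ℂ := ((q:ℂ) - (q:ℂ)^2) ^ s with hQ
  set base : ℕ → ℂ := fun r => (q:ℂ) ^ ((r:ℂ) + s) with hbase
  set f : ℕ → ℕ → ℂ := fun k r =>
    Q * (a r * (q:ℂ) ^ ((r:ℂ) * z)) * (base r) ^ k with hf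
  have hQfact : Q = ((1-q : ℝ):ℂ) ^ s * (q:ℂ) ^ s := by
    rw [hQ]
    have e : (q:ℂ) - (q:ℂ)^2 = ((1-q : ℝ):ℂ) * ((q:ℝ):ℂ) := by push_cast; ring
    rw [e, ← Complex.ofReal_mul, show ((1-q) * q : ℝ) = (1-q) * q from rfl]
    rw [Complex.ofReal_mul, Complex.mul_cpow_ofReal_nonneg h1q.le hq0.le]
  -- per-k binomial expansion
  have hu_lt : ∀ k : ℕ, ‖(q:ℂ) ^ ((k:ℂ) + z)‖ < 1 := by
    intro k
    rw [hqnorm]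
    have : ((k:ℂ) + z).re = (k:ℝ) + z.re := by simp
    rw [this]
    exact Real.rpow_lt_one hq0.le hq1 (by positivity)
  have hterm : ∀ k : ℕ, HasSum (fun r => f k r)
      ((q:ℂ) ^ (s * ((k:ℂ) + 1)) / (qBracket q ((k:ℂ) + z)) ^ s) := by
    intro k
    set u : ℂ := (q:ℂ) ^ ((k:ℂ) + z) with hu
    have hun : ‖u‖ < 1 := hu_lt k
    have h1u : (1:ℂ) - u ≠ 0 := by
      intro h
      have : (1:ℂ) = u := by linear_combination h
      rw [← this] at hun; simp at hun
    have hb := (hasSum_binomial s hun).mul_left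
      (((1-q : ℝ):ℂ) ^ s * (q:ℂ) ^ (s * ((k:ℂ) + 1)))
    have hCs : ((1-q : ℝ):ℂ) ^ s ≠ 0 := by
      rw [Ne, Complex.cpow_eq_zero_iff]
      rintro ⟨h, -⟩
      exact ofReal_ne_zero.mpr h1q.ne' h
    have h1us : ((1:ℂ) - u) ^ s ≠ 0 := by
      rw [Ne, Complex.cpow_eq_zero_iff]
      rintro ⟨h, -⟩
      exact h1u h
    -- value equality
    have hval : ((1-q : ℝ):ℂ) ^ s * (q:ℂ) ^ (s * ((k:ℂ) + 1)) * ((1 - u) ^ (-s)) =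
        (q:ℂ) ^ (s * ((k:ℂ) + 1)) / (qBracket q ((k:ℂ) + z)) ^ s := by
      have hqb : qBracket q ((k:ℂ) + z) = (1 - u) / ((1-q : ℝ):ℂ) := by
        rw [qBracket, hu]; push_cast; ring
      rw [hqb, cpow_div_ofReal h1u h1q s, cpow_neg]
      field_simp
    rw [← hval]
    -- function equality
    have hfun : ∀ r : ℕ, ((1-q : ℝ):ℂ) ^ s * (q:ℂ) ^ (s * ((k:ℂ) + 1)) *
        (a r * u ^ r) = f k r := by
      intro r
      have hur : u ^ r = (q:ℂ) ^ ((r:ℂ) * ((k:ℂ) + z)) := by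
        rw [hu, ← Complex.cpow_nat_mul]
      have hbk : (base r) ^ k = (q:ℂ) ^ ((k:ℂ) * ((r:ℂ) + s)) := by
        rw [hbase, ← Complex.cpow_nat_mul]
      have e1 : s * ((k:ℂ) + 1) = s + s * (k:ℂ) := by ring
      have e2 : (r:ℂ) * ((k:ℂ) + z) = (r:ℂ) * z + (r:ℂ) * (k:ℂ) := by ring
      have e3 : (k:ℂ) * ((r:ℂ) + s) = (r:ℂ) * (k:ℂ) + s * (k:ℂ) := by ring
      rw [hf]
      simp only []
      rw [hbk, hur, hQfact, e1, e2, e3, Complex.cpow_add _ _ hq0',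
        Complex.cpow_add _ _ hq0', Complex.cpow_add _ _ hq0']
      ring
    exact (funext hfun : _ = fun r => f k r) ▸ hb
  -- per-r geometric series
  have hbn : ∀ r : ℕ, ‖base r‖ < 1 := by
    intro r
    rw [hbase]
    simp only []
    rw [hqnorm]
    have : ((r:ℂ) + s).re = (r:ℝ) + s.re := by simp
    rw [this]
    exact Real.rpow_lt_one hq0.le hq1 (by positivity)
  have hgeo : ∀ r : ℕ, HasSum (fun k => f k r)
      (Q * (a r * (q:ℂ) ^ ((r:ℂ) * z) / (1 - base r))) := by
    intro r
    have := (hasSum_geometric_of_norm_lt_one (hbn r)).mul_left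
      (Q * (a r * (q:ℂ) ^ ((r:ℂ) * z)))
    have e : Q * (a r * (q:ℂ) ^ ((r:ℂ) * z) / (1 - base r)) =
        Q * (a r * (q:ℂ) ^ ((r:ℂ) * z)) * (1 - base r)⁻¹ := by ring
    rw [e]; exact this
  -- summability on the product
  have hA0 : (0:ℝ) < q ^ z.re := Real.rpow_pos_of_pos hq0 _
  have hA1 : q ^ z.re < 1 := Real.rpow_lt_one hq0.le hq1 hz
  have hS0 : (0:ℝ) < q ^ s.re := Real.rpow_pos_of_pos hq0 _
  have hS1 : q ^ s.re < 1 := Real.rpow_lt_one hq0.le hq1 hs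
  set g : ℕ → ℝ := fun r =>
    ‖Q‖ * ((ascPochhammer ℝ r).eval (‖s‖+1) / r.factorial * (q ^ z.re) ^ r) with hg
  set h : ℕ → ℝ := fun k => (q ^ s.re) ^ k with hh
  have hgs : Summable g := (summable_asc_aux (by positivity) hA0 hA1).mul_left _
  have hhs : Summable h := summable_geometric_of_lt_one hS0.le hS1
  have hgnn : ∀ r, 0 ≤ g r := by
    intro r
    have := asc_eval_nonneg (by positivity : (0:ℝ) ≤ ‖s‖+1) r
    have h2 : (0:ℝ) < r.factorial := by positivity
    rw [hg]
    positivity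
  have hhnn : ∀ k, 0 ≤ h k := fun k => by rw [hh]; positivity
  have hgh : Summable (fun p : ℕ × ℕ => h p.1 * g p.2) :=
    hhs.mul_of_nonneg hgs hhnn hgnn
  have hbound : ∀ p : ℕ × ℕ, ‖f p.1 p.2‖ ≤ h p.1 * g p.2 := by
    rintro ⟨k, r⟩
    rw [hf]
    simp only []
    rw [norm_mul, norm_mul, norm_mul, norm_pow]
    have h1 : ‖a r‖ ≤ (ascPochhammer ℝ r).eval (‖s‖+1) / r.factorial := norm_coeff_le s r
    have h2 : ‖(q:ℂ) ^ ((r:ℂ) * z)‖ = (q ^ z.re) ^ r := by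
      rw [hqnorm]
      have : ((r:ℂ) * z).re = (r:ℝ) * z.re := by simp
      rw [this, mul_comm, Real.rpow_mul hq0.le, Real.rpow_natCast]
    have hb1 : ‖base r‖ ≤ q ^ s.re := by
      rw [hbase]
      simp only []
      rw [hqnorm]
      have : ((r:ℂ) + s).re = (r:ℝ) + s.re := by simp
      rw [this]
      exact Real.rpow_le_rpow_of_exponent_ge hq0 hq1.le
        (le_add_of_nonneg_left (Nat.cast_nonneg r))
    rw [h2]
    have hfact : (0:ℝ) ≤ (ascPochhammer ℝ r).eval (‖s‖+1) / r.factorial := by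
      have := asc_eval_nonneg (by positivity : (0:ℝ) ≤ ‖s‖+1) r
      have h2' : (0:ℝ) < r.factorial := by positivity
      positivity
    calc ‖Q‖ * (‖a r‖ * (q ^ z.re) ^ r) * ‖base r‖ ^ k
        ≤ ‖Q‖ * ((ascPochhammer ℝ r).eval (‖s‖+1) / r.factorial * (q ^ z.re) ^ r) *
          (q ^ s.re) ^ k := by
          gcongr
      _ = h k * g r := by rw [hh, hg]; ring
  have hFsum : Summable (Function.uncurry f) := by
    apply Summable.of_norm
    exact hgh.of_nonneg_of_le (fun p => norm_nonneg _) hbound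
  -- assemble
  have key : (∑' k : ℕ, (q : ℂ) ^ (s * ((k:ℂ) + 1)) / (qBracket q ((k:ℂ) + z)) ^ s) =
      Q * ∑' r : ℕ, a r * (q:ℂ) ^ ((r:ℂ) * z) / (1 - base r) := by
    calc (∑' k : ℕ, (q : ℂ) ^ (s * ((k:ℂ) + 1)) / (qBracket q ((k:ℂ) + z)) ^ s)
        = ∑' k, ∑' r, f k r := tsum_congr fun k => ((hterm k).tsum_eq).symm
      _ = ∑' r, ∑' k, f k r :=
          (Summable.tsum_comm' hFsum (fun k => (hterm k).summable) (fun r => (hgeo r).summable)).symm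
      _ = ∑' r, Q * (a r * (q:ℂ) ^ ((r:ℂ) * z) / (1 - base r)) :=
          tsum_congr fun r => (hgeo r).tsum_eq
      _ = Q * ∑' r, a r * (q:ℂ) ^ ((r:ℂ) * z) / (1 - base r) := tsum_mul_left
  rw [key]

end Main
end

section
/- For 0 < q < 1 and Re(z) > 0, the series Σ_{k=0}^∞ q^{s(k+1)} / [k+z]_q^s converges absolutely for every complex s with Re(s) > 0, and defines a holomorphic function of s on the right half-plane {s : Re(s) > 0}. -/
open Complex

lemma qB_abs_lower {q : ℝ} {z : ℂ} (hq0 : 0 < q) (hq1 : q < 1) (hz : 0 < z.re) (k : ℕ) :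
    (1 - q ^ z.re) / (1 - q) ≤ ‖qBracket q ((k : ℂ) + z)‖ := by
  have h1q : (0:ℝ) < 1 - q := by linarith
  have habs : ‖(q:ℂ) ^ ((k:ℂ) + z)‖ = q ^ ((k:ℝ) + z.re) := by
    rw [norm_cpow_eq_rpow_re_of_pos hq0]; simp
  have hle : q ^ ((k:ℝ) + z.re) ≤ q ^ z.re :=
    Real.rpow_le_rpow_of_exponent_ge hq0 hq1.le (by have := Nat.cast_nonneg (α := ℝ) k; linarith)
  have hnum : 1 - q ^ z.re ≤ ‖1 - (q:ℂ) ^ ((k:ℂ) + z)‖ := by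
    calc 1 - q ^ z.re ≤ 1 - ‖(q:ℂ) ^ ((k:ℂ) + z)‖ := by rw [habs]; linarith
    _ ≤ ‖1 - (q:ℂ) ^ ((k:ℂ) + z)‖ := by
        simpa using norm_sub_norm_le (1:ℂ) ((q:ℂ) ^ ((k:ℂ) + z))
  have hden : ‖1 - (q:ℂ)‖ = 1 - q := by
    rw [show (1 : ℂ) - (q:ℂ) = ((1 - q : ℝ) : ℂ) by push_cast; ring, Complex.norm_real,
      Real.norm_of_nonneg h1q.le]
  rw [qBracket, norm_div, hden]
  gcongr

lemma qH_bound {q : ℝ} {z : ℂ} (hq0 : 0 < q) (hq1 : q < 1) (hz : 0 < z.re)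
    {a b M : ℝ} (ha : 0 < a) (k : ℕ) {s : ℂ} (hsa : a ≤ s.re) (hsb : s.re ≤ b)
    (hM : |s.im| ≤ M) :
    ‖(q : ℂ) ^ (s * (k + 1)) / (qBracket q ((k : ℂ) + z)) ^ s‖ ≤
      (Real.exp (Real.pi * M) / (min ((1 - q ^ z.re) / (1 - q)) 1) ^ b) * (q ^ a) ^ (k + 1) := by
  have h1q : (0:ℝ) < 1 - q := by linarith
  have hqz1 : q ^ z.re < 1 := Real.rpow_lt_one hq0.le hq1 hz
  set c : ℝ := (1 - q ^ z.re) / (1 - q) with hc_def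
  have hc : 0 < c := by
    apply div_pos <;> linarith
  set m : ℝ := min c 1 with hm_def
  have hm0 : 0 < m := lt_min hc one_pos
  have hm1 : m ≤ 1 := min_le_right _ _
  set d : ℂ := qBracket q ((k : ℂ) + z) with hd_def
  have hcd : c ≤ ‖d‖ := qB_abs_lower hq0 hq1 hz k
  have hd0 : d ≠ 0 := by
    intro h
    rw [h] at hcd; simp at hcd; linarith
  have hM0 : 0 ≤ M := le_trans (abs_nonneg _) hM
  -- norm of numerator
  have hnum : ‖(q : ℂ) ^ (s * (k + 1))‖ = q ^ (s.re * (k + 1)) := by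
    rw [norm_cpow_eq_rpow_re_of_pos hq0]
    norm_num [Complex.mul_re]
  -- norm of denominator
  have hden : ‖d ^ s‖ = ‖d‖ ^ s.re / Real.exp (Complex.arg d * s.im) := by
    rw [norm_cpow_of_ne_zero hd0]
  have hds0 : (0:ℝ) < ‖d‖ ^ s.re := Real.rpow_pos_of_pos (hc.trans_le hcd) _
  have key : ‖(q : ℂ) ^ (s * (k + 1)) / d ^ s‖ =
      q ^ (s.re * (k + 1)) * Real.exp (Complex.arg d * s.im) / ‖d‖ ^ s.re := by
    rw [norm_div, hnum, hden]; field_simp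
  rw [key]
  have h1 : q ^ (s.re * (k + 1)) ≤ (q ^ a) ^ (k + 1) := by
    have : q ^ (s.re * (k + 1 : ℝ)) ≤ q ^ (a * (k + 1 : ℝ)) := by
      apply Real.rpow_le_rpow_of_exponent_ge hq0 hq1.le
      have : (0:ℝ) ≤ (k:ℝ) + 1 := by positivity
      nlinarith
    calc q ^ (s.re * ((k:ℝ) + 1)) ≤ q ^ (a * ((k:ℝ) + 1)) := this
      _ = (q ^ a) ^ (k + 1) := by
          rw [← Real.rpow_natCast (q ^ a) (k+1), ← Real.rpow_mul hq0.le]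
          push_cast; ring_nf
  have h2 : Real.exp (Complex.arg d * s.im) ≤ Real.exp (Real.pi * M) := by
    apply Real.exp_le_exp.mpr
    calc Complex.arg d * s.im ≤ |Complex.arg d * s.im| := le_abs_self _
      _ = |Complex.arg d| * |s.im| := abs_mul _ _
      _ ≤ Real.pi * M := by
          apply mul_le_mul (Complex.abs_arg_le_pi d) hM (abs_nonneg _) Real.pi_pos.le
  have h3 : m ^ b ≤ ‖d‖ ^ s.re := by
    calc m ^ b ≤ m ^ s.re := Real.rpow_le_rpow_of_exponent_ge hm0 hm1 hsb
      _ ≤ ‖d‖ ^ s.re :=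
          Real.rpow_le_rpow hm0.le (le_trans (min_le_left _ _) hcd) (ha.le.trans hsa)
  calc q ^ (s.re * (k + 1)) * Real.exp (Complex.arg d * s.im) / ‖d‖ ^ s.re
      ≤ (q ^ a) ^ (k + 1) * Real.exp (Real.pi * M) / m ^ b := by
        apply div_le_div₀ (by positivity) (mul_le_mul h1 h2 (Real.exp_pos _).le (by positivity))
          (Real.rpow_pos_of_pos hm0 _) h3
    _ = Real.exp (Real.pi * M) / m ^ b * (q ^ a) ^ (k + 1) := by ring

lemma qH_geom {q : ℝ} (hq0 : 0 < q) (hq1 : q < 1) (K a : ℝ) (ha : 0 < a) :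
    Summable (fun k : ℕ => K * (q ^ a) ^ (k + 1)) := by
  have hqa : q ^ a < 1 := Real.rpow_lt_one hq0.le hq1 ha
  exact ((summable_geometric_of_lt_one (Real.rpow_nonneg hq0.le a) hqa).mul_left
    (K * q ^ a)).congr fun k => by ring

lemma qH_diff_term {q : ℝ} {z : ℂ} (hq0 : 0 < q) (hq1 : q < 1) (hz : 0 < z.re) (k : ℕ) :
    Differentiable ℂ (fun s : ℂ => (q : ℂ) ^ (s * (k + 1)) / (qBracket q ((k : ℂ) + z)) ^ s) := by
  have h1q : (0:ℝ) < 1 - q := by linarith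
  have hqz1 : q ^ z.re < 1 := Real.rpow_lt_one hq0.le hq1 hz
  have hd0 : qBracket q ((k:ℂ) + z) ≠ 0 := by
    intro h
    have h2 := qB_abs_lower hq0 hq1 hz k
    rw [h] at h2; simp at h2
    have : 0 < (1 - q ^ z.re) / (1 - q) := div_pos (by linarith) h1q
    linarith
  apply Differentiable.div
  · exact (differentiable_id.mul_const _).const_cpow (Or.inl (by exact_mod_cast hq0.ne'))
  · exact differentiable_id.const_cpow (Or.inl hd0)
  · intro x
    rw [Complex.cpow_def_of_ne_zero hd0]
    exact Complex.exp_ne_zero _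

/-- the q-Hurwitz series converges absolutely for `Re s > 0` and defines a
holomorphic function of `s` on the right half-plane. -/
theorem qHurwitz_summable_and_holomorphic (q : ℝ) (hq0 : 0 < q) (hq1 : q < 1)
    (z : ℂ) (hz : 0 < z.re) :
    (∀ s : ℂ, 0 < s.re →
        Summable (fun k : ℕ => ‖(q : ℂ) ^ (s * (k + 1)) / (qBracket q (k + z)) ^ s‖)) ∧
      DifferentiableOn ℂ
        (fun s : ℂ => ∑' k : ℕ, (q : ℂ) ^ (s * (k + 1)) / (qBracket q (k + z)) ^ s)
        {s : ℂ | 0 < s.re} := by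
  constructor
  · intro s hs
    apply Summable.of_nonneg_of_le (fun k => norm_nonneg _)
      (fun k => qH_bound hq0 hq1 hz hs k le_rfl le_rfl (le_refl |s.im|))
      (qH_geom hq0 hq1 _ _ hs)
  · intro s₀ hs₀
    simp only [Set.mem_setOf_eq] at hs₀
    set r : ℝ := s₀.re / 2 with hr
    have hr0 : 0 < r := by positivity
    refine ((differentiableOn_tsum_of_summable_norm
      (u := fun k : ℕ => (Real.exp (Real.pi * (|s₀.im| + r)) /
        (min ((1 - q ^ z.re) / (1 - q)) 1) ^ (s₀.re + r)) * (q ^ r) ^ (k + 1))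
      (qH_geom hq0 hq1 _ _ hr0)
      (fun k => (qH_diff_term hq0 hq1 hz k).differentiableOn)
      Metric.isOpen_ball ?_).differentiableAt
      (Metric.ball_mem_nhds s₀ hr0)).differentiableWithinAt
    intro k w hw
    rw [Metric.mem_ball, Complex.dist_eq] at hw
    have hre : |w.re - s₀.re| < r := by
      have := Complex.abs_re_le_norm (w - s₀)
      simp only [Complex.sub_re] at this
      linarith
    have him : |w.im - s₀.im| < r := by
      have := Complex.abs_im_le_norm (w - s₀)
      simp only [Complex.sub_im] at this
      linarith
    have hre' := abs_lt.mp hre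
    have him' := abs_lt.mp him
    exact qH_bound hq0 hq1 hz hr0 k (by simp only [hr] at *; linarith [hre'.1])
      (by linarith [hre'.2]) (by
        rw [abs_le]
        refine ⟨?_, ?_⟩
        · linarith [neg_abs_le s₀.im, him'.1]
        · linarith [le_abs_self s₀.im, him'.2])
end

section
/- For 0 < q < 1, Re(z) > 0 and r a nonnegative integer, the series Σ_{r'=0}^∞ ((s)_{r'}/r'!) q^{r'z}/(1-q^{r'+s}) converges absolutely and defines a meromorphic continuation of ζ(s,z:q) to the whole s-plane whose poles are exactly the simple poles s = -r + (2πi/log q)·l for r ∈ ℤ_{≥0} and l ∈ ℤ, with the residue at s = 0 equal to -1/(log q). -/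
open Complex

/-- The binomial-series continuation of the q-Hurwitz zeta function. -/
noncomputable def qHurwitzZeta (q : ℝ) (z s : ℂ) : ℂ :=
  ((q : ℂ) - (q : ℂ) ^ 2) ^ s *
    ∑' r : ℕ, (Polynomial.eval s (ascPochhammer ℂ r) / (r.factorial : ℂ)) *
      (q : ℂ) ^ ((r : ℂ) * z) / (1 - (q : ℂ) ^ ((r : ℂ) + s))

namespace QHW

open Filter Polynomial

/-- Pochhammer coefficient. -/
noncomputable def c (s : ℂ) (r : ℕ) : ℂ :=
  Polynomial.eval s (ascPochhammer ℂ r) / (r.factorial : ℂ)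

/-- single term of the continuation series. -/
noncomputable def term (q : ℝ) (z s : ℂ) (r : ℕ) : ℂ :=
  c s r * (q : ℂ) ^ ((r : ℂ) * z) / (1 - (q : ℂ) ^ ((r : ℂ) + s))

lemma qHurwitzZeta_eq (q : ℝ) (z s : ℂ) :
    qHurwitzZeta q z s = ((q : ℂ) - (q : ℂ) ^ 2) ^ s * ∑' r : ℕ, term q z s r := rfl

variable {q : ℝ}

lemma Qne (hq0 : 0 < q) : (q : ℂ) ≠ 0 := by
  exact_mod_cast hq0.ne'

lemma norm_Q_cpow (hq0 : 0 < q) (w : ℂ) : ‖(q : ℂ) ^ w‖ = q ^ w.re := by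
  rw [Complex.norm_cpow_eq_rpow_re_of_pos hq0]

lemma Q_cpow_eq_exp (hq0 : 0 < q) (w : ℂ) :
    (q : ℂ) ^ w = Complex.exp ((Real.log q : ℂ) * w) := by
  rw [Complex.ofReal_log hq0.le, ← Complex.cpow_def_of_ne_zero (Qne hq0)]

lemma logq_ne (hq0 : 0 < q) (hq1 : q < 1) : Real.log q ≠ 0 :=
  (Real.log_neg hq0 hq1).ne

lemma Q_cpow_add (hq0 : 0 < q) (a b : ℂ) : (q : ℂ) ^ (a + b) = (q : ℂ) ^ a * (q : ℂ) ^ b :=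
  Complex.cpow_add _ _ (Qne hq0)

lemma Q_cpow_pow (hq0 : 0 < q) (a : ℂ) (n : ℕ) :
    ((q : ℂ) ^ a) ^ n = (q : ℂ) ^ (a * n) := by
  rw [Q_cpow_eq_exp hq0, Q_cpow_eq_exp hq0, ← Complex.exp_nat_mul]
  ring_nf

lemma denom_eq_zero_iff (hq0 : 0 < q) (hq1 : q < 1) (w : ℂ) :
    1 - (q : ℂ) ^ w = 0 ↔ ∃ l : ℤ, w = (2 * Real.pi * I / Real.log q) * l := by
  have hL : (Real.log q : ℂ) ≠ 0 := by exact_mod_cast (Real.log_neg hq0 hq1).ne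
  rw [sub_eq_zero, eq_comm, Complex.cpow_def_of_ne_zero (Qne hq0),
    ← Complex.ofReal_log hq0.le, Complex.exp_eq_one_iff]
  constructor
  · rintro ⟨n, hn⟩
    refine ⟨n, ?_⟩
    field_simp
    linear_combination hn
  · rintro ⟨l, hl⟩
    refine ⟨l, ?_⟩
    rw [hl]
    field_simp

lemma re_eq_zero_of_denom_zero (hq0 : 0 < q) (hq1 : q < 1) {w : ℂ}
    (h : 1 - (q : ℂ) ^ w = 0) : w.re = 0 := by
  have h1 : (q : ℂ) ^ w = 1 := (sub_eq_zero.mp h).symm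
  have h2 : Complex.exp ((Real.log q : ℂ) * w) = 1 := by
    rw [← Q_cpow_eq_exp hq0]; exact h1
  have h3 : Real.exp (((Real.log q : ℂ) * w).re) = 1 := by
    rw [← Complex.norm_exp, h2, norm_one]
  rw [Real.exp_eq_one_iff] at h3
  rw [Complex.re_ofReal_mul] at h3
  rcases mul_eq_zero.mp h3 with h | h
  · exact absurd h (Real.log_neg hq0 hq1).ne
  · exact h

lemma poch_norm_le (s : ℂ) (m : ℕ) (hm : ‖s‖ ≤ m) :
    ∀ r : ℕ, ‖Polynomial.eval s (ascPochhammer ℂ r)‖ ≤ (((ascPochhammer ℕ r).eval m : ℕ) : ℝ)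
  | 0 => by simp
  | (r + 1) => by
    rw [ascPochhammer_succ_right, ascPochhammer_succ_right]
    simp only [Polynomial.eval_mul, Polynomial.eval_add, Polynomial.eval_X,
      Polynomial.eval_natCast, norm_mul, Nat.cast_mul, Nat.cast_add]
    have h1 := poch_norm_le s m hm r
    have h2 : ‖s + (r : ℂ)‖ ≤ (m : ℝ) + r := by
      calc ‖s + (r : ℂ)‖ ≤ ‖s‖ + ‖(r : ℂ)‖ := norm_add_le _ _
        _ ≤ (m : ℝ) + r := by simp; exact hm
    exact mul_le_mul h1 h2 (norm_nonneg _) (by positivity)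

lemma c_norm_le (s : ℂ) {m : ℕ} (hm : ‖s‖ ≤ m) (hm1 : 1 ≤ m) (r : ℕ) :
    ‖c s r‖ ≤ ((m + r : ℕ) : ℝ) ^ m := by
  obtain ⟨n, rfl⟩ : ∃ n, m = n + 1 := ⟨m - 1, (Nat.succ_pred_eq_of_pos hm1).symm⟩
  have h2 : (ascPochhammer ℕ r).eval (n + 1) = r.factorial * (n + r).choose r := by
    rw [ascPochhammer_nat_eq_ascFactorial, Nat.ascFactorial_eq_factorial_mul_choose]
  have h3 : (n + r).choose r ≤ (n + 1 + r) ^ (n + 1) := by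
    have e1 : (n + r).choose r = (n + r).choose n := by
      have := Nat.choose_symm (n := n + r) (k := r) (Nat.le_add_left _ _)
      simpa using this.symm
    calc (n + r).choose r = (n + r).choose n := e1
      _ ≤ (n + r) ^ n := Nat.choose_le_pow _ _
      _ ≤ (n + 1 + r) ^ n := Nat.pow_le_pow_left (by omega) _
      _ ≤ (n + 1 + r) ^ (n + 1) := Nat.pow_le_pow_right (by omega) (by omega)
  unfold c
  rw [norm_div, Complex.norm_natCast]
  rw [div_le_iff₀ (by positivity)]
  calc ‖Polynomial.eval s (ascPochhammer ℂ r)‖ ≤ (((ascPochhammer ℕ r).eval (n+1) : ℕ) : ℝ) :=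
        poch_norm_le s _ hm r
    _ = (r.factorial : ℝ) * ((n + r).choose r : ℝ) := by rw [h2]; push_cast; ring
    _ ≤ ((n + 1 + r : ℕ) : ℝ) ^ (n+1) * (r.factorial : ℝ) := by
        rw [mul_comm]
        apply mul_le_mul_of_nonneg_right _ (by positivity)
        exact_mod_cast h3

lemma summable_maj (m : ℕ) {x : ℝ} (hx0 : 0 < x) (hx1 : x < 1) :
    Summable (fun r : ℕ => ((m + r : ℕ) : ℝ) ^ m * x ^ r) := by
  have h0 : Summable (fun r : ℕ => (r : ℝ) ^ m * x ^ r) :=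
    summable_pow_mul_geometric_of_norm_lt_one m (by rwa [Real.norm_eq_abs, abs_of_pos hx0])
  have h1 : Summable (fun r : ℕ => ((m + r : ℝ)) ^ m * x ^ (m + r)) := by
    have := (summable_nat_add_iff (f := fun r : ℕ => (r : ℝ) ^ m * x ^ r) m).2 h0
    refine this.congr fun r => ?_
    rw [add_comm r m]
    push_cast
    ring
  have h2 := h1.mul_left ((x ^ m)⁻¹)
  refine h2.congr fun r => ?_
  push_cast
  rw [pow_add]
  field_simp

lemma norm_term_num (hq0 : 0 < q) (z s : ℂ) (r : ℕ) :
    ‖c s r * (q : ℂ) ^ ((r : ℂ) * z)‖ = ‖c s r‖ * (q ^ z.re) ^ r := by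
  rw [norm_mul, norm_Q_cpow hq0]
  congr 1
  have h : ((r : ℂ) * z).re = (r : ℝ) * z.re := by
    simp [Complex.mul_re]
  rw [h, mul_comm, Real.rpow_mul hq0.le, Real.rpow_natCast]

lemma denom_lower (hq0 : 0 < q) (hq1 : q < 1) {s : ℂ} {r : ℕ}
    (h : q ^ ((r : ℝ) + s.re) ≤ 1 / 2) : 1 / 2 ≤ ‖1 - (q : ℂ) ^ ((r : ℂ) + s)‖ := by
  have h1 : ‖(q : ℂ) ^ ((r : ℂ) + s)‖ ≤ 1 / 2 := by
    rw [norm_Q_cpow hq0]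
    simpa using h
  calc (1 : ℝ) / 2 = 1 - 1 / 2 := by norm_num
    _ ≤ 1 - ‖(q : ℂ) ^ ((r : ℂ) + s)‖ := by linarith
    _ ≤ ‖1 - (q : ℂ) ^ ((r : ℂ) + s)‖ := by
        simpa using norm_sub_norm_le (1 : ℂ) ((q : ℂ) ^ ((r : ℂ) + s))

lemma exists_R0 (hq0 : 0 < q) (hq1 : q < 1) (M : ℝ) :
    ∃ R₀ : ℕ, ∀ r : ℕ, R₀ ≤ r → ∀ t : ℝ, -M ≤ t → q ^ ((r : ℝ) + t) ≤ 1 / 2 := by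
  have h0 : Tendsto (fun n : ℕ => q ^ (-M) * q ^ n) atTop (nhds 0) := by
    simpa using (tendsto_pow_atTop_nhds_zero_of_lt_one (by linarith) hq1).const_mul (q ^ (-M))
  have h1 : ∀ᶠ n : ℕ in atTop, q ^ (-M) * q ^ n < 1 / 2 :=
    h0.eventually_lt_const (by norm_num)
  obtain ⟨R₀, hR⟩ := eventually_atTop.mp h1
  refine ⟨R₀, fun r hr t ht => ?_⟩
  calc q ^ ((r : ℝ) + t) ≤ q ^ ((r : ℝ) + (-M)) :=
        Real.rpow_le_rpow_of_exponent_ge hq0 hq1.le (by linarith)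
    _ = q ^ (-M) * q ^ r := by
        rw [Real.rpow_add hq0, Real.rpow_natCast, mul_comm]
    _ ≤ 1 / 2 := (hR r hr).le

lemma summable_norm_term (hq0 : 0 < q) (hq1 : q < 1) {z : ℂ} (hz : 0 < z.re) (s : ℂ) :
    Summable (fun r : ℕ => ‖term q z s r‖) := by
  obtain ⟨R₀, hR⟩ := exists_R0 hq0 hq1 (-s.re)
  set m : ℕ := max 1 ⌈‖s‖⌉₊ with hm
  have hm1 : 1 ≤ m := le_max_left _ _
  have hms : ‖s‖ ≤ m := by
    refine le_trans (Nat.le_ceil _) ?_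
    exact_mod_cast le_max_right 1 ⌈‖s‖⌉₊
  set x : ℝ := q ^ z.re with hx
  have hx0 : 0 < x := Real.rpow_pos_of_pos hq0 _
  have hx1 : x < 1 := Real.rpow_lt_one hq0.le hq1 hz
  rw [← summable_nat_add_iff R₀]
  have hmaj : Summable (fun r : ℕ => 2 * (((m + (r + R₀) : ℕ) : ℝ) ^ m * x ^ (r + R₀))) := by
    have := (summable_nat_add_iff
      (f := fun r : ℕ => ((m + r : ℕ) : ℝ) ^ m * x ^ r) R₀).2 (summable_maj m hx0 hx1)
    exact this.mul_left 2
  refine Summable.of_nonneg_of_le (fun r => norm_nonneg _) (fun r => ?_) hmaj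
  have hd : 1 / 2 ≤ ‖1 - (q : ℂ) ^ (((r + R₀ : ℕ) : ℂ) + s)‖ :=
    denom_lower hq0 hq1 (hR (r + R₀) (by omega) s.re (by linarith))
  have hnum : ‖c s (r + R₀) * (q : ℂ) ^ (((r + R₀ : ℕ) : ℂ) * z)‖
      ≤ ((m + (r + R₀) : ℕ) : ℝ) ^ m * x ^ (r + R₀) := by
    rw [norm_term_num hq0]
    exact mul_le_mul_of_nonneg_right (c_norm_le s hms hm1 _) (by positivity)
  show ‖term q z s (r + R₀)‖ ≤ _
  unfold term
  rw [norm_div]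
  calc ‖c s (r + R₀) * (q : ℂ) ^ (((r + R₀ : ℕ) : ℂ) * z)‖ / ‖1 - (q : ℂ) ^ (((r + R₀ : ℕ) : ℂ) + s)‖
      ≤ ‖c s (r + R₀) * (q : ℂ) ^ (((r + R₀ : ℕ) : ℂ) * z)‖ / (1 / 2) :=
        div_le_div_of_nonneg_left (norm_nonneg _) (by norm_num) hd
    _ = 2 * ‖c s (r + R₀) * (q : ℂ) ^ (((r + R₀ : ℕ) : ℂ) * z)‖ := by ring
    _ ≤ 2 * (((m + (r + R₀) : ℕ) : ℝ) ^ m * x ^ (r + R₀)) := by linarith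

lemma summable_term (hq0 : 0 < q) (hq1 : q < 1) {z : ℂ} (hz : 0 < z.re) (s : ℂ) :
    Summable (fun r : ℕ => term q z s r) :=
  (summable_norm_term hq0 hq1 hz s).of_norm

lemma denom_ne (hq0 : 0 < q) (hq1 : q < 1) {s : ℂ}
    (hs : ¬ ∃ r : ℕ, ∃ l : ℤ, s = -(r : ℂ) + (2 * Real.pi * I / Real.log q) * l) (r : ℕ) :
    1 - (q : ℂ) ^ ((r : ℂ) + s) ≠ 0 := by
  intro h
  obtain ⟨l, hl⟩ := (denom_eq_zero_iff hq0 hq1 _).1 h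
  exact hs ⟨r, l, by linear_combination hl⟩

lemma term_differentiableAt (hq0 : 0 < q) (z : ℂ) {s : ℂ} {r : ℕ}
    (h : 1 - (q : ℂ) ^ ((r : ℂ) + s) ≠ 0) :
    DifferentiableAt ℂ (fun w => term q z w r) s := by
  unfold term c
  apply DifferentiableAt.div
  · exact (((ascPochhammer ℂ r).differentiableAt).div_const _).mul_const _
  · apply DifferentiableAt.const_sub
    apply DifferentiableAt.const_cpow
    · exact (differentiableAt_const _).add differentiableAt_id
    · exact Or.inl (Qne hq0)
  · exact h

section Binomial

lemma c_zero (s : ℂ) : c s 0 = 1 := by simp [c]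

lemma c_rec (s : ℂ) (r : ℕ) : c s (r + 1) * ((r : ℂ) + 1) = c s r * (s + r) := by
  unfold c
  rw [ascPochhammer_succ_right]
  simp only [Polynomial.eval_mul, Polynomial.eval_add, Polynomial.eval_X,
    Polynomial.eval_natCast, Nat.factorial_succ, Nat.cast_mul]
  have h1 : ((r.factorial : ℂ)) ≠ 0 := by exact_mod_cast r.factorial_ne_zero
  have h2 : ((r : ℂ) + 1) ≠ 0 := by
    exact_mod_cast Nat.cast_add_one_ne_zero (R := ℂ) r
  field_simp
  push_cast
  ring

lemma u_summable (m : ℕ) {t : ℝ} (ht0 : 0 < t) (ht1 : t < 1) :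
    Summable (fun r : ℕ => (((m + 1) + r : ℕ) : ℝ) ^ (m + 1) * t ^ r * t⁻¹) :=
  (summable_maj (m + 1) ht0 ht1).mul_right t⁻¹

lemma deriv_term_bound {s : ℂ} {m : ℕ} (hm : ‖s‖ ≤ m) (hm1 : 1 ≤ m)
    {t : ℝ} (ht0 : 0 < t) (ht1 : t < 1) {y : ℂ} (hy : ‖y‖ ≤ t) (r : ℕ) :
    ‖c s r * ((r : ℂ) * y ^ (r - 1))‖ ≤ (((m + 1) + r : ℕ) : ℝ) ^ (m + 1) * t ^ r * t⁻¹ := by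
  cases r with
  | zero => simp; positivity
  | succ r =>
    have e1 : t ^ (r + 1) * t⁻¹ = t ^ r := by
      rw [pow_succ]
      field_simp
    rw [mul_assoc, e1, norm_mul, norm_mul, Complex.norm_natCast]
    simp only [Nat.add_sub_cancel]
    have b1 : ‖c s (r + 1)‖ ≤ ((m + (r + 1) : ℕ) : ℝ) ^ m := c_norm_le s hm hm1 (r + 1)
    have b2 : ‖y ^ r‖ ≤ t ^ r := by
      rw [norm_pow]
      exact pow_le_pow_left₀ (norm_nonneg _) hy r
    have hb1 : ((m + (r + 1) : ℕ) : ℝ) ^ m ≤ (((m + 1) + (r + 1) : ℕ) : ℝ) ^ m :=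
      pow_le_pow_left₀ (by positivity) (by exact_mod_cast (by omega : m + (r+1) ≤ (m+1) + (r+1))) m
    have hb2 : ((r + 1 : ℕ) : ℝ) ≤ (((m + 1) + (r + 1) : ℕ) : ℝ) := by
      exact_mod_cast (by omega : r + 1 ≤ (m+1) + (r+1))
    calc ‖c s (r + 1)‖ * (((r + 1 : ℕ) : ℝ) * ‖y ^ r‖)
        ≤ ((m + (r + 1) : ℕ) : ℝ) ^ m * (((r + 1 : ℕ) : ℝ) * t ^ r) := by
          apply mul_le_mul b1 _ (by positivity) (by positivity)
          exact mul_le_mul_of_nonneg_left b2 (by positivity)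
      _ = (((m + (r + 1) : ℕ) : ℝ) ^ m * ((r + 1 : ℕ) : ℝ)) * t ^ r := by ring
      _ ≤ ((((m + 1) + (r + 1) : ℕ) : ℝ) ^ m * (((m + 1) + (r + 1) : ℕ) : ℝ)) * t ^ r := by
          apply mul_le_mul_of_nonneg_right _ (by positivity)
          exact mul_le_mul hb1 hb2 (by positivity) (by positivity)
      _ = (((m + 1) + (r + 1) : ℕ) : ℝ) ^ (m + 1) * t ^ r := by rw [← pow_succ]

lemma binom_summable {s : ℂ} {m : ℕ} (hm : ‖s‖ ≤ m) (hm1 : 1 ≤ m)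
    {v : ℂ} {t : ℝ} (hv : ‖v‖ ≤ t) (ht0 : 0 < t) (ht1 : t < 1) :
    Summable (fun r : ℕ => c s r * v ^ r) := by
  apply Summable.of_norm
  refine Summable.of_nonneg_of_le (fun r => norm_nonneg _) (fun r => ?_)
    (summable_maj m ht0 ht1)
  rw [norm_mul, norm_pow]
  apply mul_le_mul (c_norm_le s hm hm1 r) _ (by positivity) (by positivity)
  exact pow_le_pow_left₀ (norm_nonneg _) hv r

lemma binom_deriv_summable {s : ℂ} {m : ℕ} (hm : ‖s‖ ≤ m) (hm1 : 1 ≤ m)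
    {v : ℂ} {t : ℝ} (hv : ‖v‖ ≤ t) (ht0 : 0 < t) (ht1 : t < 1) :
    Summable (fun r : ℕ => c s r * ((r : ℂ) * v ^ (r - 1))) := by
  apply Summable.of_norm
  exact Summable.of_nonneg_of_le (fun r => norm_nonneg _)
    (fun r => deriv_term_bound hm hm1 ht0 ht1 hv r) (u_summable m ht0 ht1)

lemma hasSum_binomial (s : ℂ) {w : ℂ} (hw : ‖w‖ < 1) :
    HasSum (fun r : ℕ => c s r * w ^ r) ((1 - w) ^ (-s)) := by
  set m : ℕ := max 1 ⌈‖s‖⌉₊ with hmdef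
  have hm1 : 1 ≤ m := le_max_left _ _
  have hm : ‖s‖ ≤ m := by
    refine le_trans (Nat.le_ceil _) ?_
    exact_mod_cast le_max_right 1 ⌈‖s‖⌉₊
  -- derivative of the sum
  have hder : ∀ v : ℂ, ‖v‖ < 1 →
      HasDerivAt (fun y : ℂ => ∑' r : ℕ, c s r * y ^ r)
        (∑' r : ℕ, c s r * ((r : ℂ) * v ^ (r - 1))) v := by
    intro v hv
    set t : ℝ := (1 + ‖v‖) / 2 with htdef
    have ht0 : 0 < t := by positivity
    have ht1 : t < 1 := by
      rw [htdef]; linarith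
    have htv : ‖v‖ < t := by rw [htdef]; linarith
    apply hasDerivAt_tsum_of_isPreconnected (u_summable m ht0 ht1)
      (Metric.isOpen_ball (x := (0:ℂ)) (ε := t)) ((convex_ball (0:ℂ) t).isPreconnected)
      (fun r y _ => (hasDerivAt_pow r y).const_mul (c s r))
    · intro r y hy
      have hyt : ‖y‖ ≤ t := by
        rw [Metric.mem_ball, dist_zero_right] at hy
        exact hy.le
      exact deriv_term_bound hm hm1 ht0 ht1 hyt r
    · show (0 : ℂ) ∈ Metric.ball (0 : ℂ) t
      simpa using ht0
    · exact binom_summable hm hm1 (by simpa using ht0.le) ht0 ht1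
    · show v ∈ Metric.ball (0 : ℂ) t
      simpa [dist_zero_right] using htv
  -- the ODE
  have hode : ∀ v : ℂ, ‖v‖ < 1 →
      (1 - v) * (∑' r : ℕ, c s r * ((r : ℂ) * v ^ (r - 1)))
        = s * ∑' r : ℕ, c s r * v ^ r := by
    intro v hv
    set t : ℝ := (1 + ‖v‖) / 2 with htdef
    have ht0 : 0 < t := by positivity
    have ht1 : t < 1 := by rw [htdef]; linarith
    have htv : ‖v‖ ≤ t := by rw [htdef]; linarith
    have Sd := binom_deriv_summable hm hm1 htv ht0 ht1 (v := v)
    have S1 := binom_summable hm hm1 htv ht0 ht1 (v := v)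
    have Sshift : Summable (fun r : ℕ => c s (r + 1) * (((r : ℂ) + 1) * v ^ r)) := by
      have := (summable_nat_add_iff 1).2 Sd
      refine this.congr fun r => ?_
      simp [Nat.add_sub_cancel]
    have Smulv : Summable (fun r : ℕ => c s r * ((r : ℂ) * v ^ r)) := by
      have := Sd.mul_left v
      refine this.congr fun r => ?_
      cases r with
      | zero => simp
      | succ r => simp only [Nat.add_sub_cancel]; push_cast; ring
    have e1 : (∑' r : ℕ, c s r * ((r : ℂ) * v ^ (r - 1)))
        = ∑' r : ℕ, c s (r + 1) * (((r : ℂ) + 1) * v ^ r) := by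
      rw [Sd.tsum_eq_zero_add]
      simp [Nat.add_sub_cancel]
    have e2 : v * (∑' r : ℕ, c s r * ((r : ℂ) * v ^ (r - 1)))
        = ∑' r : ℕ, c s r * ((r : ℂ) * v ^ r) := by
      rw [← tsum_mul_left]
      refine tsum_congr fun r => ?_
      cases r with
      | zero => simp
      | succ r => simp only [Nat.add_sub_cancel]; push_cast; ring
    rw [sub_mul, one_mul, e2, e1, ← Sshift.tsum_sub Smulv, ← tsum_mul_left]
    refine tsum_congr fun r => ?_
    have := c_rec s r
    push_cast
    linear_combination v ^ r * this
  -- the product is constant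
  set φ : ℂ → ℂ := fun v => (∑' r : ℕ, c s r * v ^ r) * (1 - v) ^ s with hφdef
  have hφ : ∀ v ∈ Metric.ball (0 : ℂ) 1, HasDerivAt φ 0 v := by
    intro v hv
    rw [Metric.mem_ball, dist_zero_right] at hv
    have hvne : (1 : ℂ) - v ≠ 0 := by
      intro h
      have : v = 1 := by linear_combination -h
      rw [this] at hv; simp at hv
    have hsl : (1 - v) ∈ Complex.slitPlane := by
      left
      simp only [Complex.sub_re, Complex.one_re]
      have : v.re ≤ ‖v‖ := by
        calc v.re ≤ |v.re| := le_abs_self _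
          _ ≤ ‖v‖ := by exact Complex.abs_re_le_norm v
      linarith
    have d1 : HasDerivAt (fun y : ℂ => (1 - y) ^ s) (s * (1 - v) ^ (s - 1) * (-1)) v :=
      HasDerivAt.cpow_const ((hasDerivAt_id v).const_sub 1) hsl
    have d0 := hder v hv
    have dprod := d0.mul d1
    have hE : (∑' r : ℕ, c s r * ((r : ℂ) * v ^ (r - 1))) * (1 - v) ^ s
        + (∑' r : ℕ, c s r * v ^ r) * (s * (1 - v) ^ (s - 1) * (-1)) = 0 := by
      have hcp : (1 - v) ^ s = (1 - v) ^ (s - 1) * (1 - v) := by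
        nth_rewrite 3 [← Complex.cpow_one (1 - v)]
        rw [← Complex.cpow_add _ _ hvne, sub_add_cancel]
      rw [hcp]
      linear_combination (1 - v) ^ (s - 1) * hode v hv
    rw [hφdef]
    have := dprod
    rw [hE] at this
    exact this
  have hconst : φ w = φ 0 := by
    have hdiff : DifferentiableOn ℂ φ (Metric.ball (0 : ℂ) 1) :=
      fun v hv => ((hφ v hv).differentiableAt).differentiableWithinAt
    have hfz : ∀ x ∈ Metric.ball (0 : ℂ) 1,
        fderivWithin ℂ φ (Metric.ball (0 : ℂ) 1) x = 0 := by
      intro x hx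
      rw [fderivWithin_of_isOpen Metric.isOpen_ball hx, (hφ x hx).hasFDerivAt.fderiv]
      ext y
      simp
    exact (convex_ball (0 : ℂ) 1).is_const_of_fderivWithin_eq_zero hdiff hfz
      (by simpa [dist_zero_right] using hw) (by simp)
  have hφ0 : φ 0 = 1 := by
    rw [hφdef]
    simp only [sub_zero, Complex.one_cpow, mul_one]
    rw [tsum_eq_single 0 (fun r hr => by simp [zero_pow hr])]
    simp [c_zero]
  have hwne : (1 : ℂ) - w ≠ 0 := by
    intro h
    have : w = 1 := by linear_combination -h
    rw [this] at hw; simp at hw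
  have hpow_ne : (1 - w) ^ s ≠ 0 := by
    intro h
    exact hwne ((Complex.cpow_eq_zero_iff _ _).1 h).1
  have hval : (∑' r : ℕ, c s r * w ^ r) = (1 - w) ^ (-s) := by
    have h1 : (∑' r : ℕ, c s r * w ^ r) * (1 - w) ^ s = 1 := by
      conv_rhs => rw [← hφ0]
      exact hconst
    rw [Complex.cpow_neg]
    field_simp [hpow_ne] at h1 ⊢
    linear_combination h1
  have S1 : Summable (fun r : ℕ => c s r * w ^ r) := by
    refine binom_summable hm hm1 (t := (1 + ‖w‖) / 2) (by linarith) (by positivity) (by linarith)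
  exact hval ▸ S1.hasSum

end Binomial

section Identity

variable {q : ℝ}

lemma div_ofReal_cpow {a : ℂ} (ha : a ≠ 0) {b : ℝ} (hb : 0 < b) (s : ℂ) :
    (a / (b : ℂ)) ^ s = a ^ s / (b : ℂ) ^ s := by
  have hb0 : (b : ℂ) ≠ 0 := by exact_mod_cast hb.ne'
  have hd : a / (b : ℂ) ≠ 0 := div_ne_zero ha hb0
  rw [Complex.cpow_def_of_ne_zero hd, Complex.cpow_def_of_ne_zero ha,
    Complex.cpow_def_of_ne_zero hb0, ← Complex.exp_sub]
  congr 1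
  have e : a / (b : ℂ) = ((b⁻¹ : ℝ) : ℂ) * a := by
    push_cast
    field_simp
  rw [e, Complex.log_ofReal_mul (inv_pos.2 hb) ha, Real.log_inv, ← Complex.ofReal_log hb.le]
  push_cast
  ring

lemma pre_eq (hq0 : 0 < q) (hq1 : q < 1) (s : ℂ) :
    ((q : ℂ) - (q : ℂ) ^ 2) ^ s = (q : ℂ) ^ s * ((1 - q : ℝ) : ℂ) ^ s := by
  have h1 : ((q : ℂ) - (q : ℂ) ^ 2) = ((q : ℝ) : ℂ) * ((1 - q : ℝ) : ℂ) := by push_cast; ring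
  rw [h1, ← Complex.mul_cpow_ofReal_nonneg hq0.le (by linarith : (0:ℝ) ≤ 1 - q)]

lemma norm_W_lt_one (hq0 : 0 < q) (hq1 : q < 1) {z : ℂ} (hz : 0 < z.re) (k : ℕ) :
    ‖(q : ℂ) ^ ((k : ℂ) + z)‖ < 1 := by
  rw [norm_Q_cpow hq0]
  apply Real.rpow_lt_one hq0.le hq1
  simp only [Complex.add_re, Complex.natCast_re]
  positivity

lemma zeta_term_eq (hq0 : 0 < q) (hq1 : q < 1) {z : ℂ} (hz : 0 < z.re) (s : ℂ) (k : ℕ) :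
    (q : ℂ) ^ (s * (k + 1)) / (qBracket q ((k : ℂ) + z)) ^ s
      = ((q : ℂ) - (q : ℂ) ^ 2) ^ s * (q : ℂ) ^ (s * k) *
          (1 - (q : ℂ) ^ ((k : ℂ) + z)) ^ (-s) := by
  have hwk := norm_W_lt_one hq0 hq1 hz k
  have hane : (1 : ℂ) - (q : ℂ) ^ ((k : ℂ) + z) ≠ 0 := by
    intro h
    rw [sub_eq_zero] at h
    rw [← h] at hwk
    simp at hwk
  have h1q : (0 : ℝ) < 1 - q := by linarith
  have hWne : ((1 : ℂ) - (q : ℂ) ^ ((k : ℂ) + z)) ^ s ≠ 0 := by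
    intro h
    exact hane ((Complex.cpow_eq_zero_iff _ _).1 h).1
  have hCne : ((1 - q : ℝ) : ℂ) ^ s ≠ 0 := by
    intro h
    have := ((Complex.cpow_eq_zero_iff _ _).1 h).1
    exact absurd this (by exact_mod_cast h1q.ne')
  unfold qBracket
  have e0 : (1 : ℂ) - (q : ℂ) = ((1 - q : ℝ) : ℂ) := by push_cast; ring
  rw [e0, div_ofReal_cpow hane h1q, pre_eq hq0 hq1, Complex.cpow_neg]
  have e1 : s * ((k : ℂ) + 1) = s + s * k := by ring
  rw [e1, Q_cpow_add hq0]
  field_simp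

set_option maxHeartbeats 1000000 in
lemma identity_re_pos (hq0 : 0 < q) (hq1 : q < 1) {z : ℂ} (hz : 0 < z.re)
    {s : ℂ} (hs : 0 < s.re) :
    qHurwitzZeta q z s = ∑' k : ℕ, (q : ℂ) ^ (s * (k + 1)) / (qBracket q ((k : ℂ) + z)) ^ s := by
  classical
  set pre : ℂ := ((q : ℂ) - (q : ℂ) ^ 2) ^ s with hpre
  set A : ℕ → ℕ → ℂ :=
    fun k r => pre * (q : ℂ) ^ (s * k) * (c s r * (q : ℂ) ^ (((k : ℂ) + z) * r)) with hA
  set m : ℕ := max 1 ⌈‖s‖⌉₊ with hmdef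
  have hm1 : 1 ≤ m := le_max_left _ _
  have hm : ‖s‖ ≤ m := by
    refine le_trans (Nat.le_ceil _) ?_
    exact_mod_cast le_max_right 1 ⌈‖s‖⌉₊
  set x : ℝ := q ^ z.re with hx
  have hx0 : 0 < x := Real.rpow_pos_of_pos hq0 _
  have hx1 : x < 1 := Real.rpow_lt_one hq0.le hq1 hz
  set y : ℝ := q ^ s.re with hy
  have hy0 : 0 < y := Real.rpow_pos_of_pos hq0 _
  have hy1 : y < 1 := Real.rpow_lt_one hq0.le hq1 hs
  -- norm bound for A
  have hAbound : ∀ k r : ℕ,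
      ‖A k r‖ ≤ (‖pre‖ * y ^ k) * (((m + r : ℕ) : ℝ) ^ m * x ^ r) := by
    intro k r
    rw [hA]
    simp only [norm_mul]
    have e1 : ‖(q : ℂ) ^ (s * (k : ℂ))‖ = y ^ k := by
      rw [norm_Q_cpow hq0]
      have : (s * (k : ℂ)).re = s.re * (k : ℝ) := by
        simp [Complex.mul_re]
      rw [this, Real.rpow_mul hq0.le, Real.rpow_natCast]
    have e2 : ‖(q : ℂ) ^ (((k : ℂ) + z) * (r : ℂ))‖ ≤ x ^ r := by
      rw [norm_Q_cpow hq0]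
      have hre : (((k : ℂ) + z) * (r : ℂ)).re = ((k : ℝ) + z.re) * (r : ℝ) := by
        simp [Complex.mul_re, Complex.add_re]
      rw [hre]
      calc q ^ (((k : ℝ) + z.re) * (r : ℝ)) ≤ q ^ (z.re * (r : ℝ)) := by
            apply Real.rpow_le_rpow_of_exponent_ge hq0 hq1.le
            have : (0 : ℝ) ≤ (k : ℝ) * (r : ℝ) := by positivity
            nlinarith
        _ = x ^ r := by
            rw [Real.rpow_mul hq0.le, Real.rpow_natCast]
    rw [e1]
    have hcb : ‖c s r‖ ≤ ((m + r : ℕ) : ℝ) ^ m := c_norm_le s hm hm1 r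
    calc ‖pre‖ * y ^ k * (‖c s r‖ * ‖(q : ℂ) ^ (((k : ℂ) + z) * (r : ℂ))‖)
        ≤ ‖pre‖ * y ^ k * (((m + r : ℕ) : ℝ) ^ m * x ^ r) := by
          apply mul_le_mul_of_nonneg_left _ (by positivity)
          exact mul_le_mul hcb e2 (norm_nonneg _) (by positivity)
      _ = (‖pre‖ * y ^ k) * (((m + r : ℕ) : ℝ) ^ m * x ^ r) := by ring
  -- summability of the double series
  have hAsum : Summable (Function.uncurry A) := by
    apply Summable.of_norm
    refine Summable.of_nonneg_of_le (fun p => norm_nonneg _) (fun p => hAbound p.1 p.2) ?_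
    exact Summable.mul_of_nonneg
      ((summable_geometric_of_lt_one hy0.le hy1).mul_left ‖pre‖)
      (summable_maj m hx0 hx1)
      (fun k => by positivity) (fun r => by positivity)
  -- row sums: for fixed k
  have hrow : ∀ k : ℕ,
      (q : ℂ) ^ (s * (k + 1)) / (qBracket q ((k : ℂ) + z)) ^ s = ∑' r : ℕ, A k r := by
    intro k
    rw [zeta_term_eq hq0 hq1 hz s k]
    have hb := (hasSum_binomial s (norm_W_lt_one hq0 hq1 hz k)).tsum_eq
    rw [← hb, ← tsum_mul_left]
    refine tsum_congr fun r => ?_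
    rw [hA, Q_cpow_pow hq0]
  -- column sums: for fixed r
  have hcol : ∀ r : ℕ, pre * term q z s r = ∑' k : ℕ, A k r := by
    intro r
    have hgr : ‖(q : ℂ) ^ (s + r)‖ < 1 := by
      rw [norm_Q_cpow hq0]
      apply Real.rpow_lt_one hq0.le hq1
      simp only [Complex.add_re, Complex.natCast_re]
      positivity
    have hgeo := tsum_geometric_of_norm_lt_one hgr
    have hAkr : ∀ k : ℕ, A k r = (pre * (c s r * (q : ℂ) ^ (z * r))) * ((q : ℂ) ^ (s + r)) ^ k := by
      intro k
      rw [hA, Q_cpow_pow hq0]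
      have e2 : (q : ℂ) ^ (s * (k : ℂ)) * (q : ℂ) ^ (((k : ℂ) + z) * (r : ℂ))
          = (q : ℂ) ^ (z * r) * (q : ℂ) ^ ((s + r) * k) := by
        rw [← Q_cpow_add hq0, ← Q_cpow_add hq0]
        congr 1
        ring
      calc pre * (q : ℂ) ^ (s * (k : ℂ)) * (c s r * (q : ℂ) ^ (((k : ℂ) + z) * (r : ℂ)))
          = pre * c s r * ((q : ℂ) ^ (s * (k : ℂ)) * (q : ℂ) ^ (((k : ℂ) + z) * (r : ℂ))) := by
            ring
        _ = pre * c s r * ((q : ℂ) ^ (z * r) * (q : ℂ) ^ ((s + r) * k)) := by rw [e2]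
        _ = (pre * (c s r * (q : ℂ) ^ (z * r))) * (q : ℂ) ^ ((s + r) * (k : ℕ)) := by
            push_cast
            ring
    calc pre * term q z s r
        = (pre * (c s r * (q : ℂ) ^ (z * r))) * (1 - (q : ℂ) ^ (s + r))⁻¹ := by
          unfold term
          rw [mul_comm z (r : ℂ), add_comm s (r : ℂ)]
          ring
      _ = (pre * (c s r * (q : ℂ) ^ (z * r))) * ∑' k : ℕ, ((q : ℂ) ^ (s + r)) ^ k := by
          rw [hgeo]
      _ = ∑' k : ℕ, (pre * (c s r * (q : ℂ) ^ (z * r))) * ((q : ℂ) ^ (s + r)) ^ k := by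
          rw [tsum_mul_left]
      _ = ∑' k : ℕ, A k r := by
          exact tsum_congr fun k => (hAkr k).symm
  -- put it together
  have hswap : ∑' (r : ℕ) (k : ℕ), A k r = ∑' (k : ℕ) (r : ℕ), A k r :=
    hAsum.tsum_comm' (fun k => hAsum.prod_factor k)
      (fun r => (hAsum.prod_symm).prod_factor r)
  calc qHurwitzZeta q z s = pre * ∑' r : ℕ, term q z s r := rfl
    _ = ∑' r : ℕ, pre * term q z s r := by rw [tsum_mul_left]
    _ = ∑' (r : ℕ) (k : ℕ), A k r := tsum_congr hcol
    _ = ∑' (k : ℕ) (r : ℕ), A k r := hswap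
    _ = ∑' k : ℕ, (q : ℂ) ^ (s * (k + 1)) / (qBracket q ((k : ℂ) + z)) ^ s :=
        tsum_congr fun k => (hrow k).symm

end Identity

section Diff

variable {q : ℝ}

lemma norm_term_le_of (hq0 : 0 < q) (hq1 : q < 1) (z : ℂ) {s : ℂ} {m : ℕ}
    (hm : ‖s‖ ≤ m) (hm1 : 1 ≤ m) {r : ℕ} (hden2 : q ^ ((r : ℝ) + s.re) ≤ 1 / 2) :
    ‖term q z s r‖ ≤ 2 * (((m + r : ℕ) : ℝ) ^ m * (q ^ z.re) ^ r) := by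
  have hd := denom_lower hq0 hq1 hden2
  have hnum : ‖c s r * (q : ℂ) ^ ((r : ℂ) * z)‖ ≤ ((m + r : ℕ) : ℝ) ^ m * (q ^ z.re) ^ r := by
    rw [norm_term_num hq0]
    exact mul_le_mul_of_nonneg_right (c_norm_le s hm hm1 r) (by positivity)
  unfold term
  rw [norm_div]
  calc ‖c s r * (q : ℂ) ^ ((r : ℂ) * z)‖ / ‖1 - (q : ℂ) ^ ((r : ℂ) + s)‖
      ≤ ‖c s r * (q : ℂ) ^ ((r : ℂ) * z)‖ / (1 / 2) :=
        div_le_div_of_nonneg_left (norm_nonneg _) (by norm_num) hd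
    _ = 2 * ‖c s r * (q : ℂ) ^ ((r : ℂ) * z)‖ := by ring
    _ ≤ 2 * (((m + r : ℕ) : ℝ) ^ m * (q ^ z.re) ^ r) := by linarith

lemma norm_ite_term_le (E : Set ℕ) [DecidablePred (· ∈ E)] (q : ℝ) (z s : ℂ) (r : ℕ) :
    ‖(if r ∈ E then 0 else term q z s r)‖ ≤ ‖term q z s r‖ := by
  split
  · simp
  · exact le_rfl

lemma summable_ite_term (hq0 : 0 < q) (hq1 : q < 1) {z : ℂ} (hz : 0 < z.re)
    (E : Set ℕ) [DecidablePred (· ∈ E)] (s : ℂ) :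
    Summable (fun r : ℕ => if r ∈ E then 0 else term q z s r) := by
  apply Summable.of_norm
  exact Summable.of_nonneg_of_le (fun r => norm_nonneg _) (norm_ite_term_le E q z s)
    (summable_norm_term hq0 hq1 hz s)

lemma diffOn_ite (hq0 : 0 < q) (hq1 : q < 1) {z : ℂ} (hz : 0 < z.re)
    (E : Set ℕ) [DecidablePred (· ∈ E)] {s₀ : ℂ} {ε : ℝ} (hε : 0 < ε)
    (hden : ∀ s ∈ Metric.ball s₀ ε, ∀ r : ℕ, r ∉ E → 1 - (q : ℂ) ^ ((r : ℂ) + s) ≠ 0) :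
    DifferentiableOn ℂ (fun s => ∑' r : ℕ, if r ∈ E then 0 else term q z s r)
      (Metric.ball s₀ ε) := by
  obtain ⟨R₀, hR⟩ := exists_R0 hq0 hq1 (ε - s₀.re)
  set m : ℕ := max 1 ⌈‖s₀‖ + ε⌉₊ with hmdef
  have hm1 : 1 ≤ m := le_max_left _ _
  have hmb : ∀ s ∈ Metric.ball s₀ ε, ‖s‖ ≤ m := by
    intro s hsb
    rw [Metric.mem_ball, dist_eq_norm] at hsb
    have h1 : ‖s‖ - ‖s₀‖ ≤ ‖s - s₀‖ := norm_sub_norm_le s s₀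
    have h2 : ‖s‖ ≤ ‖s₀‖ + ε := by linarith
    refine le_trans h2 (le_trans (Nat.le_ceil _) ?_)
    exact_mod_cast le_max_right 1 ⌈‖s₀‖ + ε⌉₊
  have hre : ∀ s ∈ Metric.ball s₀ ε, -(ε - s₀.re) ≤ s.re := by
    intro s hsb
    rw [Metric.mem_ball] at hsb
    have h1 : |s.re - s₀.re| ≤ dist s s₀ := by
      rw [dist_eq_norm, ← Complex.sub_re]
      exact Complex.abs_re_le_norm _
    have h2 : s₀.re - s.re ≤ ε := by
      rcases abs_le.mp (le_of_lt (lt_of_le_of_lt h1 hsb)) with ⟨ha, hb⟩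
      linarith
    linarith
  set x : ℝ := q ^ z.re with hx
  have hx0 : 0 < x := Real.rpow_pos_of_pos hq0 _
  have hx1 : x < 1 := Real.rpow_lt_one hq0.le hq1 hz
  have hdiffterm : ∀ (r : ℕ), DifferentiableOn ℂ
      (fun s => if r ∈ E then 0 else term q z s r) (Metric.ball s₀ ε) := by
    intro r
    by_cases hrE : r ∈ E
    · simp only [hrE, if_true]
      exact differentiableOn_const 0
    · simp only [hrE, if_false]
      intro s hsb
      exact (term_differentiableAt hq0 z (hden s hsb r hrE)).differentiableWithinAt
  have htail : DifferentiableOn ℂ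
      (fun s => ∑' r : ℕ, if (r + R₀) ∈ E then 0 else term q z s (r + R₀))
      (Metric.ball s₀ ε) := by
    refine Complex.differentiableOn_tsum_of_summable_norm
      (u := fun r => 2 * (((m + (r + R₀) : ℕ) : ℝ) ^ m * x ^ (r + R₀)))
      ?_ (fun r => hdiffterm (r + R₀)) Metric.isOpen_ball ?_
    · exact (((summable_nat_add_iff R₀).2 (summable_maj m hx0 hx1))).mul_left 2
    · intro r s hsb
      refine le_trans (norm_ite_term_le E q z s (r + R₀)) ?_
      refine norm_term_le_of hq0 hq1 z (hmb s hsb) hm1 ?_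
      exact hR (r + R₀) (by omega) s.re (hre s hsb)
  have hfin : DifferentiableOn ℂ
      (fun s => ∑ r ∈ Finset.range R₀, if r ∈ E then 0 else term q z s r)
      (Metric.ball s₀ ε) :=
    DifferentiableOn.fun_sum fun r _ => hdiffterm r
  refine (hfin.add htail).congr fun s hsb => ?_
  exact (Summable.sum_add_tsum_nat_add R₀ (summable_ite_term hq0 hq1 hz E s)).symm

lemma re_eq_neg (hq0 : 0 < q) (hq1 : q < 1) {s : ℂ} {r : ℕ}
    (h : 1 - (q : ℂ) ^ ((r : ℂ) + s) = 0) : s.re = -(r : ℝ) := by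
  have := re_eq_zero_of_denom_zero hq0 hq1 h
  simp only [Complex.add_re, Complex.natCast_re] at this
  linarith

lemma abs_re_sub_le (s p : ℂ) : |s.re - p.re| ≤ dist s p := by
  rw [dist_eq_norm, ← Complex.sub_re]
  exact Complex.abs_re_le_norm _

lemma nat_eq_of_dist_lt_one {r r₁ : ℕ} (h : |(r : ℝ) - (r₁ : ℝ)| < 1) : r = r₁ := by
  have h3 : ((|(r : ℤ) - (r₁ : ℤ)| : ℤ) : ℝ) < 1 := by
    push_cast
    exact h
  have h4 : |(r : ℤ) - (r₁ : ℤ)| < 1 := by exact_mod_cast h3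
  rw [abs_lt] at h4
  omega

lemma nat_eq_of_abs (x : ℝ) {r r₁ : ℕ} (h : |x + r| < 1 / 2) (h' : |x + r₁| < 1 / 2) :
    r = r₁ := by
  apply nat_eq_of_dist_lt_one
  have e : (r : ℝ) - r₁ = (x + r) - (x + r₁) := by ring
  rw [e]
  calc |(x + r) - (x + r₁)| ≤ |x + r| + |x + r₁| := abs_sub _ _
    _ < 1 := by linarith

lemma good_ball (hq0 : 0 < q) (hq1 : q < 1) {s₀ : ℂ}
    (hs₀ : ¬ ∃ r : ℕ, ∃ l : ℤ, s₀ = -(r : ℂ) + (2 * Real.pi * I / Real.log q) * l) :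
    ∃ ε : ℝ, 0 < ε ∧ ∀ s ∈ Metric.ball s₀ ε, ∀ r : ℕ, 1 - (q : ℂ) ^ ((r : ℂ) + s) ≠ 0 := by
  have key : ∀ (ε' : ℝ), ε' ≤ 1 / 4 → ∀ s ∈ Metric.ball s₀ ε', ∀ r : ℕ,
      1 - (q : ℂ) ^ ((r : ℂ) + s) = 0 → |s₀.re + (r : ℝ)| < 1 / 2 := by
    intro ε' hε' s hsb r h0
    rw [Metric.mem_ball] at hsb
    have hsre := re_eq_neg hq0 hq1 h0
    have hd2 : |s.re - s₀.re| ≤ dist s s₀ := abs_re_sub_le s s₀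
    have he : |s₀.re + (r : ℝ)| = |s.re - s₀.re| := by
      rw [hsre, abs_sub_comm]
      congr 1
      ring
    rw [he]
    calc |s.re - s₀.re| ≤ dist s s₀ := hd2
      _ < ε' := hsb
      _ ≤ 1 / 2 := by linarith
  by_cases hex : ∃ r₁ : ℕ, |s₀.re + (r₁ : ℝ)| < 1 / 2
  · obtain ⟨r₁, hr₁⟩ := hex
    have hd : 1 - (q : ℂ) ^ ((r₁ : ℂ) + s₀) ≠ 0 := denom_ne hq0 hq1 hs₀ r₁
    have hcont : Continuous (fun s : ℂ => 1 - (q : ℂ) ^ ((r₁ : ℂ) + s)) := by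
      have e : (fun s : ℂ => 1 - (q : ℂ) ^ ((r₁ : ℂ) + s))
          = fun s => 1 - Complex.exp ((Real.log q : ℂ) * ((r₁ : ℂ) + s)) := by
        funext s
        rw [Q_cpow_eq_exp hq0]
      rw [e]
      exact continuous_const.sub
        (Complex.continuous_exp.comp (continuous_const.mul (continuous_const.add continuous_id)))
    have hopen : IsOpen {s : ℂ | 1 - (q : ℂ) ^ ((r₁ : ℂ) + s) ≠ 0} := by
      have : {s : ℂ | 1 - (q : ℂ) ^ ((r₁ : ℂ) + s) ≠ 0}
          = (fun s : ℂ => 1 - (q : ℂ) ^ ((r₁ : ℂ) + s)) ⁻¹' ({0}ᶜ) := rfl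
      rw [this]
      exact (isOpen_compl_singleton).preimage hcont
    obtain ⟨ε₁, hε₁, hball⟩ := Metric.isOpen_iff.mp hopen s₀ hd
    refine ⟨min ε₁ (1 / 4), lt_min hε₁ (by norm_num), ?_⟩
    intro s hsb r h0
    have hsb1 : s ∈ Metric.ball s₀ ε₁ :=
      Metric.ball_subset_ball (min_le_left _ _) hsb
    have hsb4 : s ∈ Metric.ball s₀ (min ε₁ (1 / 4)) := hsb
    have hclose := key (min ε₁ (1 / 4)) (min_le_right _ _) s hsb4 r h0
    have : r = r₁ := nat_eq_of_abs s₀.re hclose hr₁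
    subst this
    exact (hball hsb1) h0
  · refine ⟨1 / 4, by norm_num, ?_⟩
    intro s hsb r h0
    exact hex ⟨r, key (1 / 4) le_rfl s hsb r h0⟩

lemma base_ne (hq0 : 0 < q) (hq1 : q < 1) : ((q : ℂ) - (q : ℂ) ^ 2) ≠ 0 := by
  have h1 : ((q : ℂ) - (q : ℂ) ^ 2) = ((q * (1 - q) : ℝ) : ℂ) := by push_cast; ring
  rw [h1]
  have : (0 : ℝ) < q * (1 - q) := by nlinarith
  exact_mod_cast this.ne'

lemma pre_diffAt (hq0 : 0 < q) (hq1 : q < 1) (s : ℂ) :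
    DifferentiableAt ℂ (fun w : ℂ => ((q : ℂ) - (q : ℂ) ^ 2) ^ w) s :=
  (differentiableAt_fun_id).const_cpow (Or.inl (base_ne hq0 hq1))

lemma diffAt_qHurwitz (hq0 : 0 < q) (hq1 : q < 1) {z : ℂ} (hz : 0 < z.re) {s₀ : ℂ}
    (hs₀ : ¬ ∃ r : ℕ, ∃ l : ℤ, s₀ = -(r : ℂ) + (2 * Real.pi * I / Real.log q) * l) :
    DifferentiableAt ℂ (qHurwitzZeta q z) s₀ := by
  classical
  obtain ⟨ε, hε, hden⟩ := good_ball hq0 hq1 hs₀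
  have hd := diffOn_ite hq0 hq1 hz (∅ : Set ℕ) hε (fun s hs r _ => hden s hs r)
  have he : (fun s => ∑' r : ℕ, if r ∈ (∅ : Set ℕ) then 0 else term q z s r)
      = fun s => ∑' r : ℕ, term q z s r := by
    funext s
    exact tsum_congr fun r => by simp
  rw [he] at hd
  have hg : DifferentiableAt ℂ (fun s => ∑' r : ℕ, term q z s r) s₀ :=
    hd.differentiableAt (Metric.isOpen_ball.mem_nhds (Metric.mem_ball_self hε))
  have : qHurwitzZeta q z = fun s => ((q : ℂ) - (q : ℂ) ^ 2) ^ s * ∑' r : ℕ, term q z s r := by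
    funext s
    exact qHurwitzZeta_eq q z s
  rw [this]
  exact (pre_diffAt hq0 hq1 s₀).mul hg

end Diff

section Pole

variable {q : ℝ}

lemma poch_ne_zero {p : ℂ} :
    ∀ r : ℕ, (∀ j : ℕ, j < r → p + j ≠ 0) → Polynomial.eval p (ascPochhammer ℂ r) ≠ 0
  | 0, _ => by simp
  | (r + 1), h => by
    rw [ascPochhammer_succ_right]
    simp only [Polynomial.eval_mul, Polynomial.eval_add, Polynomial.eval_X,
      Polynomial.eval_natCast]
    exact mul_ne_zero (poch_ne_zero r fun j hj => h j (by omega)) (h r (by omega))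

lemma c_ne_zero {p : ℂ} (r : ℕ) (h : ∀ j : ℕ, j < r → p + j ≠ 0) : c p r ≠ 0 :=
  div_ne_zero (poch_ne_zero r h) (by exact_mod_cast r.factorial_ne_zero)

lemma delta_mul_eq (l : ℤ) :
    (2 * (Real.pi : ℂ) * I / (Real.log q : ℂ)) * (l : ℂ)
      = ((2 * Real.pi * l / Real.log q : ℝ) : ℂ) * I := by
  push_cast
  ring

lemma p_re (r₀ : ℕ) (l : ℤ) :
    (-(r₀ : ℂ) + (2 * Real.pi * I / Real.log q) * l).re = -(r₀ : ℝ) := by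
  rw [Complex.add_re, delta_mul_eq]
  simp [Complex.mul_re]

lemma p_add_ne (hq0 : 0 < q) (hq1 : q < 1) (r₀ : ℕ) (l : ℤ) :
    ∀ j : ℕ, j < r₀ → (-(r₀ : ℂ) + (2 * Real.pi * I / Real.log q) * l) + j ≠ 0 := by
  intro j hj h
  by_cases hl : l = 0
  · subst hl
    have hre := congrArg Complex.re h
    rw [Complex.add_re, p_re] at hre
    simp only [Complex.natCast_re, Complex.zero_re] at hre
    have : (j : ℝ) = r₀ := by push_cast at hre ⊢; linarith
    have : j = r₀ := by exact_mod_cast this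
    omega
  · have him := congrArg Complex.im h
    have he : ((-(r₀ : ℂ) + (2 * Real.pi * I / Real.log q) * l) + (j : ℂ)).im
        = (2 * Real.pi * l / Real.log q : ℝ) := by
      rw [Complex.add_im, Complex.add_im, delta_mul_eq]
      simp [Complex.mul_im]
    rw [he, Complex.zero_im] at him
    have hL := logq_ne hq0 hq1
    have hl' : (l : ℝ) ≠ 0 := Int.cast_ne_zero.mpr hl
    have hpi := Real.pi_ne_zero
    rcases div_eq_zero_iff.mp him with h' | h'
    · exact (mul_ne_zero (mul_ne_zero two_ne_zero hpi) hl') h'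
    · exact hL h'
  
lemma denom_slope (hq0 : 0 < q) (hq1 : q < 1) (r₀ : ℕ) {p : ℂ}
    (hp : 1 - (q : ℂ) ^ ((r₀ : ℂ) + p) = 0) :
    Filter.Tendsto (fun s : ℂ => (s - p) / (1 - (q : ℂ) ^ ((r₀ : ℂ) + s)))
      (nhdsWithin p {p}ᶜ) (nhds (-(Real.log q : ℂ))⁻¹) := by
  have hQ1 : (q : ℂ) ^ ((r₀ : ℂ) + p) = 1 := by linear_combination -hp
  have hLne : -(Real.log q : ℂ) ≠ 0 := by
    simp only [neg_ne_zero]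
    exact_mod_cast logq_ne hq0 hq1
  have hd : HasDerivAt (fun s : ℂ => 1 - (q : ℂ) ^ ((r₀ : ℂ) + s)) (-(Real.log q : ℂ)) p := by
    have h1 : HasDerivAt (fun s : ℂ => (q : ℂ) ^ ((r₀ : ℂ) + s))
        ((q : ℂ) ^ ((r₀ : ℂ) + p) * Complex.log (q : ℂ) * 1) p :=
      HasDerivAt.const_cpow ((hasDerivAt_id p).const_add (r₀ : ℂ)) (Or.inl (Qne hq0))
    have h2 := h1.const_sub 1
    refine h2.congr_deriv ?_
    rw [hQ1, ← Complex.ofReal_log hq0.le]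
    ring
  have hs := hasDerivAt_iff_tendsto_slope.mp hd
  have hs2 := hs.inv₀ hLne
  refine Filter.Tendsto.congr (fun s => ?_) hs2
  rw [slope_def_field, hp, sub_zero, inv_div]

lemma pole_tendsto (hq0 : 0 < q) (hq1 : q < 1) {z : ℂ} (hz : 0 < z.re) (r₀ : ℕ) (l : ℤ)
    (p : ℂ) (hpdef : p = -(r₀ : ℂ) + (2 * Real.pi * I / Real.log q) * l) :
    Filter.Tendsto (fun s : ℂ => (s - p) * qHurwitzZeta q z s) (nhdsWithin p {p}ᶜ)
      (nhds (((q : ℂ) - (q : ℂ) ^ 2) ^ p * (c p r₀ * (q : ℂ) ^ ((r₀ : ℂ) * z)) *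
        (-(Real.log q : ℂ))⁻¹)) := by
  classical
  have hpre : p.re = -(r₀ : ℝ) := by rw [hpdef]; exact p_re r₀ l
  have hp0 : 1 - (q : ℂ) ^ ((r₀ : ℂ) + p) = 0 := by
    rw [denom_eq_zero_iff hq0 hq1]
    exact ⟨l, by rw [hpdef]; ring⟩
  have hden : ∀ s ∈ Metric.ball p (1 / 2 : ℝ), ∀ r : ℕ, r ∉ ({r₀} : Set ℕ) →
      1 - (q : ℂ) ^ ((r : ℂ) + s) ≠ 0 := by
    intro s hsb r hr h0
    rw [Metric.mem_ball] at hsb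
    have hsre := re_eq_neg hq0 hq1 h0
    have hd2 : |s.re - p.re| ≤ dist s p := abs_re_sub_le s p
    rw [hsre, hpre] at hd2
    have hrr : r = r₀ := by
      apply nat_eq_of_dist_lt_one
      calc |(r : ℝ) - (r₀ : ℝ)| = |(-(r : ℝ)) - (-(r₀ : ℝ))| := by
            rw [← abs_neg]
            congr 1
            ring
        _ ≤ dist s p := hd2
        _ < 1 := by linarith
    exact hr (by simpa using hrr)
  have hgd := diffOn_ite hq0 hq1 hz ({r₀} : Set ℕ) (by norm_num : (0 : ℝ) < 1 / 2) hden
  have hgdiff : DifferentiableAt ℂ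
      (fun s => ∑' r : ℕ, if r ∈ ({r₀} : Set ℕ) then 0 else term q z s r) p :=
    hgd.differentiableAt (Metric.isOpen_ball.mem_nhds (Metric.mem_ball_self (by norm_num)))
  have hdec : ∀ s : ℂ, (s - p) * qHurwitzZeta q z s
      = ((q : ℂ) - (q : ℂ) ^ 2) ^ s * (c s r₀ * (q : ℂ) ^ ((r₀ : ℂ) * z)) *
          ((s - p) / (1 - (q : ℂ) ^ ((r₀ : ℂ) + s)))
        + (s - p) * (((q : ℂ) - (q : ℂ) ^ 2) ^ s *
            ∑' r : ℕ, if r ∈ ({r₀} : Set ℕ) then 0 else term q z s r) := by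
    intro s
    rw [qHurwitzZeta_eq, (summable_term hq0 hq1 hz s).tsum_eq_add_tsum_ite r₀]
    have hite : (∑' r : ℕ, if r = r₀ then 0 else term q z s r)
        = ∑' r : ℕ, if r ∈ ({r₀} : Set ℕ) then 0 else term q z s r :=
      tsum_congr fun r => by simp [Set.mem_singleton_iff]
    rw [hite]
    unfold term
    ring
  have l1 : Filter.Tendsto
      (fun s : ℂ => ((q : ℂ) - (q : ℂ) ^ 2) ^ s * (c s r₀ * (q : ℂ) ^ ((r₀ : ℂ) * z)))
      (nhdsWithin p {p}ᶜ)
      (nhds (((q : ℂ) - (q : ℂ) ^ 2) ^ p * (c p r₀ * (q : ℂ) ^ ((r₀ : ℂ) * z)))) := by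
    apply Filter.Tendsto.mono_left _ nhdsWithin_le_nhds
    apply ContinuousAt.tendsto
    apply ContinuousAt.mul (pre_diffAt hq0 hq1 p).continuousAt
    apply ContinuousAt.mul _ continuousAt_const
    show ContinuousAt (fun s : ℂ => c s r₀) p
    unfold c
    exact (((ascPochhammer ℂ r₀).differentiableAt).div_const _).continuousAt
  have l2 := denom_slope hq0 hq1 r₀ hp0
  have l3 : Filter.Tendsto (fun s : ℂ => s - p) (nhdsWithin p {p}ᶜ) (nhds 0) := by
    apply Filter.Tendsto.mono_left _ nhdsWithin_le_nhds
    have hc : ContinuousAt (fun s : ℂ => s - p) p :=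
      (continuous_id.sub continuous_const).continuousAt
    have h := hc.tendsto
    simpa using h
  have l4 : Filter.Tendsto
      (fun s : ℂ => ((q : ℂ) - (q : ℂ) ^ 2) ^ s *
        ∑' r : ℕ, if r ∈ ({r₀} : Set ℕ) then 0 else term q z s r)
      (nhdsWithin p {p}ᶜ)
      (nhds (((q : ℂ) - (q : ℂ) ^ 2) ^ p *
        ∑' r : ℕ, if r ∈ ({r₀} : Set ℕ) then 0 else term q z p r)) := by
    apply Filter.Tendsto.mono_left _ nhdsWithin_le_nhds
    exact (((pre_diffAt hq0 hq1 p).continuousAt).mul hgdiff.continuousAt).tendsto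
  have h := (l1.mul l2).add (l3.mul l4)
  rw [zero_mul, add_zero] at h
  exact Filter.Tendsto.congr (fun s => (hdec s).symm) h

end Pole

end QHW

/-- the continuation series converges absolutely away from the set
`P = {-r + δl}`, agrees with the q-Hurwitz series on `Re s > 0`, is holomorphic off `P`,
has a simple pole at every point of `P`, and the residue at `s = 0` is `-1/log q`. -/
theorem qHurwitz_meromorphic_continuation (q : ℝ) (hq0 : 0 < q) (hq1 : q < 1)
    (z : ℂ) (hz : 0 < z.re) :
    (∀ s : ℂ, s ∉ {s : ℂ | ∃ r : ℕ, ∃ l : ℤ, s = -(r : ℂ) + (2 * Real.pi * I / Real.log q) * l} →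
        Summable (fun r : ℕ =>
          ‖(Polynomial.eval s (ascPochhammer ℂ r) / (r.factorial : ℂ)) *
            (q : ℂ) ^ ((r : ℂ) * z) / (1 - (q : ℂ) ^ ((r : ℂ) + s))‖)) ∧
    (∀ s : ℂ, 0 < s.re →
        qHurwitzZeta q z s = ∑' k : ℕ, (q : ℂ) ^ (s * (k + 1)) / (qBracket q (k + z)) ^ s) ∧
    DifferentiableOn ℂ (qHurwitzZeta q z)
      {s : ℂ | ¬ ∃ r : ℕ, ∃ l : ℤ, s = -(r : ℂ) + (2 * Real.pi * I / Real.log q) * l} ∧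
    (∀ p : ℂ, (∃ r : ℕ, ∃ l : ℤ, p = -(r : ℂ) + (2 * Real.pi * I / Real.log q) * l) →
        ∃ c : ℂ, c ≠ 0 ∧
          Filter.Tendsto (fun s : ℂ => (s - p) * qHurwitzZeta q z s)
            (nhdsWithin p {p}ᶜ) (nhds c)) ∧
    Filter.Tendsto (fun s : ℂ => s * qHurwitzZeta q z s)
      (nhdsWithin 0 {(0 : ℂ)}ᶜ) (nhds (-1 / Real.log q)) := by
  have hLne : -(Real.log q : ℂ) ≠ 0 := by
    simp only [neg_ne_zero]
    exact_mod_cast QHW.logq_ne hq0 hq1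
  refine ⟨?_, ?_, ?_, ?_, ?_⟩
  · intro s _
    have := QHW.summable_norm_term hq0 hq1 hz s
    simpa only [QHW.term, QHW.c] using this
  · intro s hs
    exact QHW.identity_re_pos hq0 hq1 hz hs
  · intro s₀ hs₀
    exact (QHW.diffAt_qHurwitz hq0 hq1 hz hs₀).differentiableWithinAt
  · rintro p ⟨r₀, l, hpdef⟩
    refine ⟨_, ?_, QHW.pole_tendsto hq0 hq1 hz r₀ l p hpdef⟩
    apply mul_ne_zero
    apply mul_ne_zero
    · intro h
      exact (QHW.base_ne hq0 hq1) ((Complex.cpow_eq_zero_iff _ _).1 h).1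
    · apply mul_ne_zero
      · refine QHW.c_ne_zero r₀ ?_
        rw [hpdef]
        exact QHW.p_add_ne hq0 hq1 r₀ l
      · intro h
        exact (QHW.Qne hq0) ((Complex.cpow_eq_zero_iff _ _).1 h).1
    · exact inv_ne_zero hLne
  · have h := QHW.pole_tendsto hq0 hq1 hz 0 0 0 (by simp)
    simp only [sub_zero] at h
    have hval : ((q : ℂ) - (q : ℂ) ^ 2) ^ (0 : ℂ) *
        (QHW.c 0 0 * (q : ℂ) ^ (((0 : ℕ) : ℂ) * z)) * (-(Real.log q : ℂ))⁻¹
        = -1 / (Real.log q : ℂ) := by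
      simp only [Nat.cast_zero, zero_mul, Complex.cpow_zero, QHW.c_zero, one_mul, mul_one]
      rw [inv_neg]
      ring
    rwa [hval] at h
end

section
/- With f(t) = q^{s(t+1)}/(1 - q^{t+z})^s for 0 < q < 1, Re(z) > 0, the k-th derivative of f with respect to t is f^{(k)}(t) = q^{s(t+1)} · s·P_k(q^{t+z}; s)/(1 - q^{t+z})^{s+k} · (log q)^k for all k ≥ 0, where P_k(x;s) are the polynomials defined by P_0(x;s) = 1/s, P_1(x;s) = 1, P_{k+1}(x;s) = (x - x²)∂_x P_k(x;s) + (kx + s)P_k(x;s). -/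
open MvPolynomial Complex

/-- The polynomials `P_k(x;s)` (for `k ≥ 1`): `P₁ = 1`,
`P_{k+1} = (x - x²) ∂ₓ P_k + (k x + s) P_k`, with `X 0 = x`, `X 1 = s`.
(`P 0` is set to `0`; the genuine `P_0 = 1/s` satisfies `s·P_0 = 1`.) -/
noncomputable def Puq : ℕ → MvPolynomial (Fin 2) ℤ
  | 0 => 0
  | 1 => 1
  | (k + 2) =>
      (X 0 - X 0 ^ 2) * pderiv 0 (Puq (k + 1)) +
        (((k + 1 : ℕ) : MvPolynomial (Fin 2) ℤ) * X 0 + X 1) * Puq (k + 1)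

/-- `s · P_k(x;s)`, with the convention `s · P_0 = 1`. -/
noncomputable def sPuq (k : ℕ) (x s : ℂ) : ℂ :=
  if k = 0 then 1 else s * aeval ![x, s] (Puq k)

lemma aeval_pair (s : ℂ) (P : MvPolynomial (Fin 2) ℤ) (x : ℂ) :
    (aeval ![x, s]) P =
      Polynomial.eval x ((aeval ![Polynomial.X, Polynomial.C s]) P) := by
  induction P using MvPolynomial.induction_on with
  | C a => simp
  | add p q hp hq => simp [hp, hq]
  | mul_X p i hp => fin_cases i <;> simp [hp]

lemma derivative_aeval_pair (s : ℂ) (P : MvPolynomial (Fin 2) ℤ) :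
    Polynomial.derivative ((aeval ![Polynomial.X, Polynomial.C s]) P) =
      (aeval ![Polynomial.X, Polynomial.C s]) (pderiv 0 P) := by
  induction P using MvPolynomial.induction_on with
  | C a => simp
  | add p q hp hq => simp [hp, hq]
  | mul_X p i hp =>
    fin_cases i <;>
      simp [pderiv_mul, pderiv_X_self, pderiv_X_of_ne, hp, Polynomial.derivative_mul] <;> ring

lemma sPuq_succ (k : ℕ) (x s : ℂ) :
    sPuq (k+1) x s =
      (x - x^2) * (if k = 0 then 0 else s * aeval ![x, s] (pderiv 0 (Puq k)))
        + ((k:ℂ) * x + s) * sPuq k x s := by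
  cases k with
  | zero => simp [sPuq, Puq]
  | succ j =>
    simp only [sPuq, Nat.succ_ne_zero, if_false]
    rw [show Puq (j+1+1) = (X 0 - X 0 ^ 2) * pderiv 0 (Puq (j + 1)) +
        (((j + 1 : ℕ) : MvPolynomial (Fin 2) ℤ) * X 0 + X 1) * Puq (j + 1) from rfl]
    simp only [map_add, map_mul, map_sub, map_pow, aeval_X, map_natCast,
      Matrix.cons_val_zero, Matrix.cons_val_one, Matrix.head_cons]
    push_cast
    ring

lemma sPuq_hasDerivAt (k : ℕ) (s : ℂ) {W : ℂ → ℂ} {W' : ℂ} {v : ℂ} (hW : HasDerivAt W W' v) :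
    HasDerivAt (fun x => sPuq k (W x) s)
      ((if k = 0 then 0 else s * aeval ![W v, s] (pderiv 0 (Puq k))) * W') v := by
  rcases eq_or_ne k 0 with hk | hk
  · subst hk
    simpa [sPuq] using hasDerivAt_const v (1:ℂ)
  · simp only [sPuq, if_neg hk, aeval_pair, ← derivative_aeval_pair]
    have h1 := (Polynomial.hasDerivAt (p := (aeval ![Polynomial.X, Polynomial.C s]) (Puq k))
      (W v)).comp v hW
    simpa [Function.comp, mul_assoc] using h1.const_mul s

lemma key_qHurwitz (q : ℝ) (hq0 : 0 < q) (hq1 : q < 1) (z s : ℂ) (k : ℕ) :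
    ∀ t : ℝ, 0 < t + z.re →
      iteratedDeriv k
          (fun u : ℝ => (q : ℂ) ^ (s * ((u : ℂ) + 1)) * (1 - (q : ℂ) ^ ((u : ℂ) + z)) ^ (-s)) t =
        (q : ℂ) ^ (s * ((t : ℂ) + 1)) * sPuq k ((q : ℂ) ^ ((t : ℂ) + z)) s *
          (1 - (q : ℂ) ^ ((t : ℂ) + z)) ^ (-(s + (k : ℂ))) * (Real.log q : ℂ) ^ k := by
  have hqne : (q : ℂ) ≠ 0 := ofReal_ne_zero.mpr hq0.ne'
  have hcpow : ∀ w : ℂ, (q : ℂ) ^ w = Complex.exp ((Real.log q : ℂ) * w) := fun w => by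
    rw [Complex.cpow_def_of_ne_zero hqne, Complex.ofReal_log hq0.le]
  have habs : ∀ u : ℝ, 0 < u + z.re →
      ‖Complex.exp ((Real.log q : ℂ) * ((u : ℂ) + z))‖ < 1 := by
    intro u hu
    rw [← hcpow, Complex.norm_cpow_eq_rpow_re_of_pos hq0]
    have : ((u : ℂ) + z).re = u + z.re := by simp
    rw [this]
    exact Real.rpow_lt_one hq0.le hq1 hu
  have hre : ∀ u : ℝ, 0 < u + z.re →
      0 < (1 - Complex.exp ((Real.log q : ℂ) * ((u : ℂ) + z))).re := by
    intro u hu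
    have h1 := Complex.re_le_norm (Complex.exp ((Real.log q : ℂ) * ((u : ℂ) + z)))
    have h2 := habs u hu
    simp only [Complex.sub_re, Complex.one_re]
    linarith
  have hne : ∀ u : ℝ, 0 < u + z.re →
      (1 : ℂ) - Complex.exp ((Real.log q : ℂ) * ((u : ℂ) + z)) ≠ 0 := by
    intro u hu h
    have := hre u hu
    rw [h] at this
    simp at this
  induction k with
  | zero =>
    intro t ht
    simp [sPuq]
  | succ k IH =>
    intro t ht
    rw [iteratedDeriv_succ]
    have hev : iteratedDeriv k
        (fun u : ℝ => (q : ℂ) ^ (s * ((u : ℂ) + 1)) * (1 - (q : ℂ) ^ ((u : ℂ) + z)) ^ (-s))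
        =ᶠ[nhds t] fun u : ℝ =>
          Complex.exp ((Real.log q : ℂ) * (s * ((u : ℂ) + 1))) *
            sPuq k (Complex.exp ((Real.log q : ℂ) * ((u : ℂ) + z))) s *
            (1 - Complex.exp ((Real.log q : ℂ) * ((u : ℂ) + z))) ^ (-(s + (k : ℂ))) *
            (Real.log q : ℂ) ^ k := by
      filter_upwards [Ioi_mem_nhds (show -z.re < t by linarith)] with u hu
      rw [IH u (by simp only [Set.mem_Ioi] at hu; linarith)]
      simp only [hcpow]
    rw [hev.deriv_eq]
    -- derivative pieces at ↑t
    have hA : HasDerivAt (fun v : ℂ => Complex.exp ((Real.log q : ℂ) * (s * (v + 1))))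
        (Complex.exp ((Real.log q : ℂ) * (s * ((t : ℂ) + 1))) * ((Real.log q : ℂ) * (s * 1)))
        (t : ℂ) :=
      ((((hasDerivAt_id ((t : ℝ) : ℂ)).add_const 1).const_mul s).const_mul
        ((Real.log q : ℂ))).cexp
    have hW : HasDerivAt (fun v : ℂ => Complex.exp ((Real.log q : ℂ) * (v + z)))
        (Complex.exp ((Real.log q : ℂ) * ((t : ℂ) + z)) * ((Real.log q : ℂ) * 1)) (t : ℂ) :=
      (((hasDerivAt_id ((t : ℝ) : ℂ)).add_const z).const_mul ((Real.log q : ℂ))).cexp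
    have hOne : HasDerivAt (fun v : ℂ => 1 - Complex.exp ((Real.log q : ℂ) * (v + z)))
        (-(Complex.exp ((Real.log q : ℂ) * ((t : ℂ) + z)) * ((Real.log q : ℂ) * 1))) (t : ℂ) :=
      hW.const_sub 1
    have hslit : (1 : ℂ) - Complex.exp ((Real.log q : ℂ) * ((t : ℂ) + z)) ∈ slitPlane :=
      Complex.mem_slitPlane_iff.mpr (Or.inl (hre t ht))
    have hE2 := hOne.cpow_const (c := -(s + (k : ℂ))) hslit
    have hP := sPuq_hasDerivAt k s hW
    have hG := ((hA.mul hP).mul hE2).mul_const ((Real.log q : ℂ) ^ k)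
    refine (hG.comp_ofReal.deriv).trans ?_
    -- now pure algebra
    simp only [hcpow, Pi.mul_apply]
    rw [show ((k + 1 : ℕ) : ℂ) = (k : ℂ) + 1 by push_cast; ring]
    rw [sPuq_succ]
    have e1 : (1 - Complex.exp ((Real.log q : ℂ) * ((t : ℂ) + z))) ^ (-(s + (k : ℂ)) - 1) =
        (1 - Complex.exp ((Real.log q : ℂ) * ((t : ℂ) + z))) ^ (-(s + ((k : ℂ) + 1))) := by
      rw [show -(s + (k : ℂ)) - 1 = -(s + ((k : ℂ) + 1)) by ring]
    have e2 : (1 - Complex.exp ((Real.log q : ℂ) * ((t : ℂ) + z))) ^ (-(s + (k : ℂ))) =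
        (1 - Complex.exp ((Real.log q : ℂ) * ((t : ℂ) + z))) ^ (-(s + ((k : ℂ) + 1))) *
          (1 - Complex.exp ((Real.log q : ℂ) * ((t : ℂ) + z))) := by
      rw [show -(s + (k : ℂ)) = -(s + ((k : ℂ) + 1)) + 1 by ring,
        Complex.cpow_add _ _ (hne t ht), Complex.cpow_one]
    rw [e1, e2]
    ring

/-- the k-th derivative of `f(t) = q^{s(t+1)} (1-q^{t+z})^{-s}` is
`q^{s(t+1)} · s P_k(q^{t+z};s) / (1-q^{t+z})^{s+k} · (log q)^k`. -/
theorem iteratedDeriv_qHurwitz_integrand (q : ℝ) (hq0 : 0 < q) (hq1 : q < 1)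
    (z s : ℂ) (hz : 0 < z.re) (k : ℕ) (t : ℝ) (ht : 0 ≤ t) :
    iteratedDeriv k
        (fun u : ℝ => (q : ℂ) ^ (s * ((u : ℂ) + 1)) * (1 - (q : ℂ) ^ ((u : ℂ) + z)) ^ (-s)) t =
      (q : ℂ) ^ (s * ((t : ℂ) + 1)) * sPuq k ((q : ℂ) ^ ((t : ℂ) + z)) s /
        (1 - (q : ℂ) ^ ((t : ℂ) + z)) ^ (s + k) * (Real.log q : ℂ) ^ k := by
  have h := key_qHurwitz q hq0 hq1 z s k t (by linarith)
  rw [h, Complex.cpow_neg, div_eq_mul_inv]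
end

section
/- For Re(β) > 0 and Re(γ - β) > 0 and |x| < 1, the Gauss hypergeometric function satisfies F(α,β,γ;x) = (Γ(γ)/(Γ(β)Γ(γ-β))) ∫_0^1 u^{β-1} (1-u)^{γ-β-1} (1-xu)^{-α} du. -/
open Complex MeasureTheory

/-- The Gauss hypergeometric function `₂F₁(α,β;γ;x)` as a power series. -/
noncomputable def gaussHyp (α β γ x : ℂ) : ℂ :=
  ∑' n : ℕ, (Polynomial.eval α (ascPochhammer ℂ n) * Polynomial.eval β (ascPochhammer ℂ n) /
    (Polynomial.eval γ (ascPochhammer ℂ n) * (n.factorial : ℂ))) * x ^ n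

open scoped Nat

lemma ascR_pos {a : ℝ} (ha : 0 < a) (n : ℕ) : 0 < (ascPochhammer ℝ n).eval a := by
  induction n with
  | zero => simp
  | succ n ih =>
    rw [ascPochhammer_succ_eval]
    exact mul_pos ih (by positivity)

lemma norm_asc_le (α : ℂ) (n : ℕ) :
    ‖(ascPochhammer ℂ n).eval α‖ ≤ (ascPochhammer ℝ n).eval (‖α‖ + 1) := by
  induction n with
  | zero => simp
  | succ n ih =>
    rw [ascPochhammer_succ_eval, ascPochhammer_succ_eval]
    refine (norm_mul_le _ _).trans ?_
    have h1 : ‖α + (n : ℂ)‖ ≤ ‖α‖ + 1 + n := by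
      refine (norm_add_le _ _).trans ?_
      simp [Complex.norm_natCast]
    exact mul_le_mul ih h1 (norm_nonneg _) (ascR_pos (by positivity) n).le

lemma summable_ascR (a : ℝ) (ha : 1 ≤ a) {r : ℝ} (hr0 : 0 ≤ r) (hr : r < 1) :
    Summable fun n : ℕ => (ascPochhammer ℝ n).eval a / n ! * r ^ n := by
  set f : ℕ → ℝ := fun n => (ascPochhammer ℝ n).eval a / n ! * r ^ n with hf
  have ha0 : (0:ℝ) < a := by linarith
  have hfnn : ∀ n, 0 ≤ f n := fun n => by
    have := (ascR_pos ha0 n).le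
    positivity
  set r' : ℝ := (1 + r) / 2 with hr'
  have hrr' : r < r' := by simp [hr']; linarith
  have hr'1 : r' < 1 := by simp [hr']; linarith
  refine summable_of_ratio_norm_eventually_le hr'1 ?_
  have hN : ∀ᶠ n : ℕ in Filter.atTop, a * r ≤ (n : ℝ) * (r' - r) + r' := by
    filter_upwards [Filter.eventually_ge_atTop ⌈a * r / (r' - r)⌉₊] with n hn
    have h1 : a * r / (r' - r) ≤ (n : ℝ) := le_trans (Nat.le_ceil _) (by exact_mod_cast hn)
    have h2 : a * r ≤ (n : ℝ) * (r' - r) := by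
      rw [div_le_iff₀ (by linarith)] at h1; linarith
    nlinarith [hr'1, hrr', hr0]
  filter_upwards [hN] with n hn
  rw [Real.norm_of_nonneg (hfnn _), Real.norm_of_nonneg (hfnn _)]
  have key : f (n + 1) = f n * ((a + n) * r / (n + 1)) := by
    rw [hf]
    simp only [ascPochhammer_succ_eval, Nat.factorial_succ, pow_succ]
    push_cast
    field_simp
  rw [key]
  have hb : (a + n) * r / (n + 1) ≤ r' := by
    rw [div_le_iff₀ (by positivity)]
    nlinarith [hn, hr0]
  calc f n * ((a + n) * r / (n + 1)) ≤ f n * r' := by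
        refine mul_le_mul_of_nonneg_left hb (hfnn n)
    _ = r' * f n := mul_comm _ _

lemma summable_norm_asc (α x : ℂ) (hx : ‖x‖ < 1) :
    Summable fun n : ℕ => ‖(ascPochhammer ℂ n).eval α‖ / n ! * ‖x‖ ^ n := by
  refine Summable.of_nonneg_of_le (fun n => by positivity)
    (fun n => ?_) (summable_ascR (‖α‖ + 1) (by linarith [norm_nonneg α]) (norm_nonneg x) hx)
  have h1 := norm_asc_le α n
  have h2 : (0:ℝ) ≤ ‖x‖ ^ n := by positivity
  gcongr
open scoped Nat

lemma onesub_slit {w : ℂ} (hw : ‖w‖ < 1) : (1 - w) ∈ Complex.slitPlane := by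
  rw [Complex.mem_slitPlane_iff]
  left
  have : w.re ≤ ‖w‖ := Complex.re_le_norm w
  simp only [Complex.sub_re, Complex.one_re]
  linarith

lemma iteratedDeriv_onesub (α : ℂ) (n : ℕ) :
    ∀ w : ℂ, ‖w‖ < 1 → iteratedDeriv n (fun z : ℂ => (1 - z) ^ (-α)) w
      = (ascPochhammer ℂ n).eval α * (1 - w) ^ (-α - n) := by
  induction n with
  | zero => intro w hw; simp
  | succ n ih =>
    intro w hw
    have hball : Metric.ball (0:ℂ) 1 ∈ nhds w := Metric.isOpen_ball.mem_nhds (by simpa using hw)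
    have hev : iteratedDeriv n (fun z : ℂ => (1 - z) ^ (-α)) =ᶠ[nhds w]
        fun z => (ascPochhammer ℂ n).eval α * (1 - z) ^ (-α - n) := by
      filter_upwards [hball] with z hz
      exact ih z (mem_ball_zero_iff.mp hz)
    rw [iteratedDeriv_succ, hev.deriv_eq]
    have hd : HasDerivAt (fun z : ℂ => (1 - z) ^ (-α - n))
        ((-α - n) * (1 - w) ^ (-α - n - 1) * (-1)) w :=
      HasDerivAt.cpow_const ((hasDerivAt_id w).const_sub 1) (onesub_slit hw)
    rw [(hd.const_mul ((ascPochhammer ℂ n).eval α)).deriv]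
    rw [ascPochhammer_succ_eval]
    have hexp : -α - ((n:ℂ)+1) - 1 + 1 = -α - (((n+1 : ℕ)):ℂ) := by push_cast; ring
    have hexp2 : -α - (n:ℂ) - 1 = -α - (((n+1 : ℕ)):ℂ) := by push_cast; ring
    rw [hexp2]
    ring

lemma hasSum_binom (α z : ℂ) (hz : ‖z‖ < 1) :
    HasSum (fun n : ℕ => (ascPochhammer ℂ n).eval α / n ! * z ^ n) ((1 - z) ^ (-α)) := by
  have hdiff : DifferentiableOn ℂ (fun z : ℂ => (1 - z) ^ (-α)) (Metric.ball 0 1) := by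
    intro w hw
    refine DifferentiableAt.differentiableWithinAt ?_
    exact DifferentiableAt.cpow ((differentiableAt_const 1).sub differentiableAt_id)
      (differentiableAt_const _) (onesub_slit (mem_ball_zero_iff.mp hw))
  have H := Complex.hasSum_taylorSeries_on_ball hdiff (mem_ball_zero_iff.mpr hz)
  have e : ∀ n : ℕ, (n ! : ℂ)⁻¹ • (z - 0) ^ n •
      iteratedDeriv n (fun z : ℂ => (1 - z) ^ (-α)) 0
      = (ascPochhammer ℂ n).eval α / n ! * z ^ n := by
    intro n
    rw [iteratedDeriv_onesub α n 0 (by simp)]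
    simp only [sub_zero, Complex.one_cpow, smul_eq_mul, mul_one]
    ring
  simp_rw [e] at H
  exact H

lemma Gamma_add_nat {s : ℂ} (hs : 0 < s.re) (n : ℕ) :
    Complex.Gamma (s + n) = (ascPochhammer ℂ n).eval s * Complex.Gamma s := by
  induction n with
  | zero => simp
  | succ n ih =>
    have hne : s + n ≠ 0 := by
      intro h
      have : (s + (n:ℂ)).re = 0 := by rw [h]; simp
      simp only [Complex.add_re, Complex.natCast_re] at this
      have : (0:ℝ) ≤ (n:ℝ) := Nat.cast_nonneg n
      linarith
    have : s + ((n+1 : ℕ):ℂ) = (s + n) + 1 := by push_cast; ring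
    rw [this, Complex.Gamma_add_one _ hne, ih, ascPochhammer_succ_eval]
    ring

lemma asc_ne_zero_of_re_pos {s : ℂ} (hs : 0 < s.re) (n : ℕ) :
    (ascPochhammer ℂ n).eval s ≠ 0 := by
  rw [Ne, ascPochhammer_eval_eq_zero_iff]
  rintro ⟨k, hk, hks⟩
  have h2 := congrArg Complex.re hks
  simp only [Complex.natCast_re, Complex.neg_re] at h2
  have : (0:ℝ) ≤ (k:ℝ) := Nat.cast_nonneg k
  linarith

lemma coeff_eq (α β γ : ℂ) (hβ : 0 < β.re) (hγβ : 0 < (γ - β).re) (n : ℕ) (x : ℂ) :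
    (Polynomial.eval α (ascPochhammer ℂ n) * Polynomial.eval β (ascPochhammer ℂ n) /
      (Polynomial.eval γ (ascPochhammer ℂ n) * (n ! : ℂ))) * x ^ n =
    (Complex.Gamma γ / (Complex.Gamma β * Complex.Gamma (γ - β))) *
      ((Polynomial.eval α (ascPochhammer ℂ n) / n ! * x ^ n) *
        Complex.betaIntegral (β + n) (γ - β)) := by
  have hγ : 0 < γ.re := by
    have : γ = β + (γ - β) := by ring
    rw [this]; simp only [Complex.add_re]; linarith
  have hβn : 0 < (β + n).re := by
    simp only [Complex.add_re, Complex.natCast_re]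
    have : (0:ℝ) ≤ (n:ℝ) := Nat.cast_nonneg n
    linarith
  have hbeta : Complex.betaIntegral (β + n) (γ - β) =
      Complex.Gamma (β + n) * Complex.Gamma (γ - β) / Complex.Gamma (γ + n) := by
    have h := Complex.Gamma_mul_Gamma_eq_betaIntegral hβn hγβ
    have hsum : β + n + (γ - β) = γ + n := by ring
    rw [hsum] at h
    have hne : Complex.Gamma (γ + n) ≠ 0 := by
      refine Complex.Gamma_ne_zero_of_re_pos ?_
      simp only [Complex.add_re, Complex.natCast_re]
      have : (0:ℝ) ≤ (n:ℝ) := Nat.cast_nonneg n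
      linarith
    field_simp [hne] at h ⊢
    rw [h]
  rw [hbeta, Gamma_add_nat hβ n, Gamma_add_nat hγ n]
  have h1 : Complex.Gamma β ≠ 0 := Complex.Gamma_ne_zero_of_re_pos hβ
  have h2 : Complex.Gamma (γ - β) ≠ 0 := Complex.Gamma_ne_zero_of_re_pos hγβ
  have h3 : Complex.Gamma γ ≠ 0 := Complex.Gamma_ne_zero_of_re_pos hγ
  have h4 : (ascPochhammer ℂ n).eval γ ≠ 0 := asc_ne_zero_of_re_pos hγ n
  have h5 : (n ! : ℂ) ≠ 0 := by exact_mod_cast Nat.factorial_ne_zero n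
  field_simp

/-- Euler's integral representation of the Gauss hypergeometric function. -/
theorem gaussHyp_euler_integral (α β γ x : ℂ) (hβ : 0 < β.re) (hγβ : 0 < (γ - β).re)
    (hx : ‖x‖ < 1) :
    gaussHyp α β γ x =
      (Complex.Gamma γ / (Complex.Gamma β * Complex.Gamma (γ - β))) *
        ∫ u in (0 : ℝ)..1,
          (u : ℂ) ^ (β - 1) * ((1 : ℂ) - u) ^ (γ - β - 1) * (1 - x * u) ^ (-α) := by
  classical
  set c : ℕ → ℂ := fun n => (ascPochhammer ℂ n).eval α / n ! * x ^ n with hc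
  set F : ℕ → ℝ → ℂ :=
    fun n u => c n * ((u : ℂ) ^ (β + n - 1) * ((1 : ℂ) - u) ^ (γ - β - 1)) with hF
  have hβn : ∀ n : ℕ, 0 < (β + n).re := by
    intro n
    simp only [Complex.add_re, Complex.natCast_re]
    have : (0:ℝ) ≤ (n:ℝ) := Nat.cast_nonneg n
    linarith
  -- integrability of each F n
  have hIntIoc : ∀ n : ℕ, IntegrableOn
      (fun u : ℝ => (u : ℂ) ^ (β + n - 1) * ((1 : ℂ) - u) ^ (γ - β - 1))
      (Set.Ioc (0:ℝ) 1) volume := by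
    intro n
    have h := Complex.betaIntegral_convergent (hβn n) hγβ
    rwa [intervalIntegrable_iff_integrableOn_Ioc_of_le zero_le_one] at h
  have hIntF : ∀ n : ℕ, IntegrableOn (F n) (Set.Ioc (0:ℝ) 1) volume := fun n =>
    (hIntIoc n).const_mul (c n)
  -- integrability of the weight A
  have hIntA : IntegrableOn
      (fun u : ℝ => (u : ℂ) ^ (β - 1) * ((1 : ℂ) - u) ^ (γ - β - 1))
      (Set.Ioc (0:ℝ) 1) volume := by
    have h := Complex.betaIntegral_convergent hβ hγβ
    rwa [intervalIntegrable_iff_integrableOn_Ioc_of_le zero_le_one] at h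
  -- summability of ‖c n‖
  have hsumc : Summable fun n => ‖c n‖ := by
    refine (summable_norm_asc α x hx).congr fun n => ?_
    rw [hc]
    simp [norm_mul, norm_div, norm_pow, Complex.norm_natCast]
  -- pointwise expansion of the integrand on Ioc 0 1
  have hpt : ∀ u ∈ Set.Ioc (0:ℝ) 1,
      (u : ℂ) ^ (β - 1) * ((1 : ℂ) - u) ^ (γ - β - 1) * (1 - x * u) ^ (-α)
        = ∑' n, F n u := by
    intro u hu
    have hu0 : (0:ℝ) < u := hu.1
    have hu1 : u ≤ 1 := hu.2
    have hxu : ‖x * (u:ℂ)‖ < 1 := by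
      rw [norm_mul, Complex.norm_real, Real.norm_of_nonneg hu0.le]
      calc ‖x‖ * u ≤ ‖x‖ * 1 := by
            exact mul_le_mul_of_nonneg_left hu1 (norm_nonneg x)
        _ = ‖x‖ := mul_one _
        _ < 1 := hx
    have hsum := (hasSum_binom α (x * u) hxu).mul_left
      ((u : ℂ) ^ (β - 1) * ((1 : ℂ) - u) ^ (γ - β - 1))
    rw [← hsum.tsum_eq]
    · refine tsum_congr fun n => ?_
      have huc : (u:ℂ) ≠ 0 := by exact_mod_cast hu0.ne'
      have hpow : (u : ℂ) ^ (β + n - 1) = (u : ℂ) ^ (β - 1) * (u : ℂ) ^ (n : ℕ) := by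
        rw [← Complex.cpow_natCast, ← Complex.cpow_add _ _ huc,
          show β - 1 + (n:ℂ) = β + n - 1 from by ring]
      rw [hF, hc]
      simp only [hpow, mul_pow]
      ring
  -- the key swap of sum and integral
  have hswap : (∫ u in (0:ℝ)..1,
      (u : ℂ) ^ (β - 1) * ((1 : ℂ) - u) ^ (γ - β - 1) * (1 - x * u) ^ (-α))
      = ∑' n, c n * Complex.betaIntegral (β + n) (γ - β) := by
    rw [intervalIntegral.integral_of_le zero_le_one]
    rw [setIntegral_congr_fun measurableSet_Ioc hpt]
    rw [integral_tsum (fun n => (hIntF n).aestronglyMeasurable) ?bound]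
    case _ =>
      refine tsum_congr fun n => ?_
      simp only [hF]
      rw [MeasureTheory.integral_const_mul]
      congr 1
      rw [Complex.betaIntegral, intervalIntegral.integral_of_le zero_le_one]
    case bound =>
      -- ∑' n, ∫⁻ ‖F n u‖₊ ≠ ∞
      set B : ENNReal := ∫⁻ u in Set.Ioc (0:ℝ) 1,
        ‖(u : ℂ) ^ (β - 1) * ((1 : ℂ) - u) ^ (γ - β - 1)‖₊ with hB
      have hBlt : B < ⊤ := hIntA.hasFiniteIntegral
      have hle : ∀ n : ℕ, (∫⁻ u in Set.Ioc (0:ℝ) 1, ‖F n u‖₊) ≤ (‖c n‖₊ : ENNReal) * B := by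
        intro n
        have : ∀ᵐ u ∂(volume.restrict (Set.Ioc (0:ℝ) 1)),
            (‖F n u‖₊ : ENNReal) ≤ (‖c n‖₊ : ENNReal) *
              ‖(u : ℂ) ^ (β - 1) * ((1 : ℂ) - u) ^ (γ - β - 1)‖₊ := by
          rw [ae_restrict_iff' measurableSet_Ioc]
          refine Filter.Eventually.of_forall fun u hu => ?_
          have hre : ‖(u : ℂ) ^ (β + n - 1)‖ ≤ ‖(u : ℂ) ^ (β - 1)‖ := by
            rw [Complex.norm_cpow_eq_rpow_re_of_pos hu.1,
              Complex.norm_cpow_eq_rpow_re_of_pos hu.1]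
            refine Real.rpow_le_rpow_of_exponent_ge hu.1 hu.2 ?_
            simp only [Complex.sub_re, Complex.add_re, Complex.one_re, Complex.natCast_re]
            have : (0:ℝ) ≤ (n:ℝ) := Nat.cast_nonneg n
            linarith
          have hnorm : ‖F n u‖ ≤ ‖c n‖ *
              ‖(u : ℂ) ^ (β - 1) * ((1 : ℂ) - u) ^ (γ - β - 1)‖ := by
            rw [hF]
            simp only [norm_mul]
            have h0 : (0:ℝ) ≤ ‖c n‖ := norm_nonneg _
            have h1 : (0:ℝ) ≤ ‖((1 : ℂ) - u) ^ (γ - β - 1)‖ := norm_nonneg _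
            calc ‖c n‖ * (‖(u : ℂ) ^ (β + n - 1)‖ * ‖((1 : ℂ) - u) ^ (γ - β - 1)‖)
                ≤ ‖c n‖ * (‖(u : ℂ) ^ (β - 1)‖ * ‖((1 : ℂ) - u) ^ (γ - β - 1)‖) := by
                  gcongr
              _ = _ := by ring
          exact_mod_cast hnorm
        calc (∫⁻ u in Set.Ioc (0:ℝ) 1, ‖F n u‖₊)
            ≤ ∫⁻ u in Set.Ioc (0:ℝ) 1, (‖c n‖₊ : ENNReal) *
              ‖(u : ℂ) ^ (β - 1) * ((1 : ℂ) - u) ^ (γ - β - 1)‖₊ := lintegral_mono_ae this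
          _ = (‖c n‖₊ : ENNReal) * B := by
              rw [lintegral_const_mul' _ _ ENNReal.coe_ne_top, hB]
      have hsnn : Summable fun n => ‖c n‖₊ := by
        rw [← NNReal.summable_coe]
        simpa using hsumc
      have hfin : (∑' n, ∫⁻ u in Set.Ioc (0:ℝ) 1, ‖F n u‖₊) < ⊤ :=
        calc (∑' n, ∫⁻ u in Set.Ioc (0:ℝ) 1, ‖F n u‖₊)
            ≤ ∑' n, (‖c n‖₊ : ENNReal) * B := ENNReal.tsum_le_tsum hle
          _ = (∑' n, (‖c n‖₊ : ENNReal)) * B := ENNReal.tsum_mul_right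
          _ < ⊤ := ENNReal.mul_lt_top
              (ENNReal.tsum_coe_ne_top_iff_summable.mpr hsnn).lt_top hBlt
      exact hfin.ne
  rw [hswap, ← tsum_mul_left]
  rw [gaussHyp]
  exact tsum_congr fun n => coeff_eq α β γ hβ hγβ n x
end
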